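/- arXiv:2203.02032 — 8 statements merged into one kernel-verified Lean document; each statement's English description precedes it below -/
import Mathlib

section
/- For every w ∈ 𝔽 with |w| > 1, the bounded weighted backward shift A_w on c₀ is chaotic: it possesses a hypercyclic vector and its set of periodic points is dense in c₀. -/
open Filter Topology
open scoped ZeroAtInfty

namespace BBSChaos

variable {𝕜 : Type*} [RCLike 𝕜]

/-- Build an element of `c₀` from a sequence tending to zero. -/
noncomputable def mk0 (f : ℕ → 𝕜) (h : Tendsto f atTop (𝓝 0)) : C₀(ℕ, 𝕜) :=
  ⟨⟨f, continuous_of_discreteTopology⟩, by rwa [cocompact_eq_atTop]⟩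

@[simp] lemma mk0_apply (f : ℕ → 𝕜) (h : Tendsto f atTop (𝓝 0)) (k : ℕ) :
    mk0 f h k = f k := rfl

def evalAM (k : ℕ) : C₀(ℕ, 𝕜) →+ 𝕜 where
  toFun f := f k
  map_zero' := rfl
  map_add' _ _ := rfl

lemma tendsto_zero (x : C₀(ℕ, 𝕜)) : Tendsto (fun k => x k) atTop (𝓝 0) := by
  have := x.zero_at_infty'
  rwa [cocompact_eq_atTop] at this

lemma norm_apply_le (x : C₀(ℕ, 𝕜)) (k : ℕ) : ‖x k‖ ≤ ‖x‖ := by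
  rw [← ZeroAtInftyContinuousMap.norm_toBCF_eq_norm]
  exact x.toBCF.norm_coe_le_norm k

lemma norm_le_of (x : C₀(ℕ, 𝕜)) {C : ℝ} (h0 : 0 ≤ C) (h : ∀ k, ‖x k‖ ≤ C) : ‖x‖ ≤ C := by
  rw [← ZeroAtInftyContinuousMap.norm_toBCF_eq_norm]
  exact (BoundedContinuousFunction.norm_le h0).2 h

lemma tail_small (x : C₀(ℕ, 𝕜)) {ε : ℝ} (hε : 0 < ε) : ∃ m : ℕ, ∀ k, m < k → ‖x k‖ ≤ ε := by
  have h := (tendsto_zero x).eventually (Metric.ball_mem_nhds (0 : 𝕜) hε)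
  rw [eventually_atTop] at h
  obtain ⟨m, hm⟩ := h
  exact ⟨m, fun k hk => le_of_lt (by simpa [dist_zero_right] using hm k hk.le)⟩

lemma div_bound {a ε W : ℝ} (ha : 0 ≤ a) (hε : 0 < ε) (hW : (a + 1) / ε ≤ W) : a / W ≤ ε := by
  have hW0 : 0 < W := lt_of_lt_of_le (div_pos (by linarith) hε) hW
  rw [div_le_iff₀ hW0]
  have := (div_le_iff₀ hε).mp hW
  nlinarith

lemma pow_apply {w : 𝕜} {A : C₀(ℕ, 𝕜) →L[𝕜] C₀(ℕ, 𝕜)}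
    (hA : ∀ (x : C₀(ℕ, 𝕜)) (k : ℕ), A x k = w * x (k + 1)) (n : ℕ) (x : C₀(ℕ, 𝕜)) (k : ℕ) :
    (A ^ n) x k = w ^ n * x (k + n) := by
  induction n generalizing x k with
  | zero => simp
  | succ n ih =>
    rw [pow_succ, ContinuousLinearMap.mul_apply, ih (A x) k, hA]
    rw [show k + n + 1 = k + (n + 1) by omega, pow_succ]
    ring

/-- Topological transitivity with explicit approximation. -/
lemma transitive {w : 𝕜} (hw : 1 < ‖w‖) {A : C₀(ℕ, 𝕜) →L[𝕜] C₀(ℕ, 𝕜)}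
    (hA : ∀ (x : C₀(ℕ, 𝕜)) (k : ℕ), A x k = w * x (k + 1))
    (x y : C₀(ℕ, 𝕜)) {ε : ℝ} (hε : 0 < ε) :
    ∃ (z : C₀(ℕ, 𝕜)) (n : ℕ), ‖z - x‖ < ε ∧ ‖(A ^ n) z - y‖ < ε := by
  have hw0 : w ≠ 0 := by
    intro h; rw [h, norm_zero] at hw; linarith
  have hε3 : 0 < ε / 3 := by linarith
  obtain ⟨m, hm⟩ := tail_small x hε3
  obtain ⟨m', hm'⟩ := tail_small y hε3
  -- choose n > m with ‖w‖ ^ n large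
  have hpow : Tendsto (fun n : ℕ => ‖w‖ ^ n) atTop atTop :=
    tendsto_pow_atTop_atTop_of_one_lt hw
  have h1 : ∀ᶠ n : ℕ in atTop, (‖y‖ + 1) / (ε / 3) ≤ ‖w‖ ^ n :=
    hpow.eventually_ge_atTop _
  obtain ⟨n, hn1, hn2⟩ := ((h1.and (eventually_gt_atTop m)).exists)
  have hWpos : (0 : ℝ) < ‖w‖ ^ n := pow_pos (by linarith) n
  have hyW : ‖y‖ / ‖w‖ ^ n ≤ ε / 3 := div_bound (norm_nonneg y) hε3 hn1
  -- define z
  set g : ℕ → 𝕜 := fun k =>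
    if k ≤ m then x k else if n ≤ k ∧ k ≤ n + m' then y (k - n) / w ^ n else 0 with hg
  have hgz : Tendsto g atTop (𝓝 0) := by
    refine tendsto_const_nhds.congr' ?_
    filter_upwards [eventually_gt_atTop (n + m')] with k hk
    have h1 : ¬ k ≤ m := by omega
    have h2 : ¬ (n ≤ k ∧ k ≤ n + m') := by omega
    simp [hg, h1, h2]
  set z : C₀(ℕ, 𝕜) := mk0 g hgz with hz
  have hgbound : ∀ k, ‖g k‖ ≤ if k ≤ m then ‖x k‖ else ε / 3 := by
    intro k
    by_cases h1 : k ≤ m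
    · simp [hg, h1]
    · simp only [hg, h1, if_false]
      by_cases h2 : n ≤ k ∧ k ≤ n + m'
      · rw [if_pos h2, norm_div, norm_pow]
        exact le_trans (by gcongr; exact norm_apply_le y _) hyW
      · simp [h2, hε3.le]
  refine ⟨z, n, ?_, ?_⟩
  · -- ‖z - x‖ < ε
    have : ‖z - x‖ ≤ 2 * (ε / 3) := by
      refine norm_le_of _ (by linarith) fun k => ?_
      rw [ZeroAtInftyContinuousMap.coe_sub]
      simp only [Pi.sub_apply]
      by_cases h1 : k ≤ m
      · have : z k = x k := by simp [hz, hg, h1]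
        rw [this, sub_self, norm_zero]; positivity
      · have hxk : ‖x k‖ ≤ ε / 3 := hm k (by omega)
        have hzk : ‖z k‖ ≤ ε / 3 := by
          have := hgbound k
          simpa [hz, h1] using this
        calc ‖z k - x k‖ ≤ ‖z k‖ + ‖x k‖ := norm_sub_le _ _
          _ ≤ 2 * (ε / 3) := by linarith
    linarith
  · -- ‖A^n z - y‖ < ε
    have key : ∀ k, (A ^ n) z k = if k ≤ m' then y k else 0 := by
      intro k
      rw [pow_apply hA]
      have h1 : ¬ k + n ≤ m := by omega
      have h2 : n ≤ k + n := by omega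
      have h3 : (k + n ≤ n + m') ↔ k ≤ m' := by omega
      have h4 : k + n - n = k := by omega
      simp only [hz, mk0_apply, hg, h1, if_false, h2, true_and, h3, h4]
      by_cases h5 : k ≤ m'
      · simp only [h5, if_true]
        field_simp
      · simp [h5]
    have : ‖(A ^ n) z - y‖ ≤ ε / 3 := by
      refine norm_le_of _ hε3.le fun k => ?_
      rw [ZeroAtInftyContinuousMap.coe_sub]
      simp only [Pi.sub_apply, key k]
      by_cases h5 : k ≤ m'
      · simp [h5, hε3.le]
      · simpa [h5] using hm' k (by omega)
    linarith

/-- Density of periodic points. -/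
lemma periodic_dense {w : 𝕜} (hw : 1 < ‖w‖) {A : C₀(ℕ, 𝕜) →L[𝕜] C₀(ℕ, 𝕜)}
    (hA : ∀ (x : C₀(ℕ, 𝕜)) (k : ℕ), A x k = w * x (k + 1)) :
    Dense {x : C₀(ℕ, 𝕜) | ∃ N : ℕ, 1 ≤ N ∧ (A ^ N) x = x} := by
  have hw0 : w ≠ 0 := by
    intro h; rw [h, norm_zero] at hw; linarith
  have hwpos : (0 : ℝ) < ‖w‖ := by linarith
  rw [Metric.dense_iff]
  intro y r hr
  have hε3 : 0 < r / 3 := by linarith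
  obtain ⟨m, hm⟩ := tail_small y hε3
  -- truncation of y
  set g : ℕ → 𝕜 := fun k => if k ≤ m then y k else 0 with hgdef
  have hgz : Tendsto g atTop (𝓝 0) := by
    refine tendsto_const_nhds.congr' ?_
    filter_upwards [eventually_gt_atTop m] with k hk
    simp [hgdef, Nat.not_le.mpr hk]
  set y' : C₀(ℕ, 𝕜) := mk0 g hgz with hy'
  have hy'y : ‖y' - y‖ ≤ r / 3 := by
    refine norm_le_of _ hε3.le fun k => ?_
    rw [ZeroAtInftyContinuousMap.coe_sub]
    simp only [Pi.sub_apply]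
    by_cases h1 : k ≤ m
    · simp [hy', hgdef, h1, hε3.le]
    · have : y' k = 0 := by simp [hy', hgdef, h1]
      rw [this]
      simpa using hm k (by omega)
  -- pick the period N
  have hpow : Tendsto (fun n : ℕ => ‖w‖ ^ n) atTop atTop :=
    tendsto_pow_atTop_atTop_of_one_lt hw
  obtain ⟨N, hN1, hN2⟩ :=
    ((hpow.eventually_ge_atTop ((‖y'‖ + 1) / (r / 3))).and (eventually_gt_atTop m)).exists
  have hNpos : 0 < N := by omega
  have hy'W : ‖y'‖ / ‖w‖ ^ N ≤ r / 3 := div_bound (norm_nonneg y') hε3 hN1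
  -- the periodic point
  set f : ℕ → 𝕜 := fun k => y' (k % N) / w ^ (N * (k / N)) with hfdef
  have hfbound : ∀ k, ‖f k‖ ≤ ‖y'‖ * ((‖w‖ ^ N)⁻¹) ^ (k / N) := by
    intro k
    rw [hfdef]
    simp only
    rw [norm_div, norm_pow, pow_mul, div_eq_mul_inv, ← inv_pow]
    gcongr
    exact norm_apply_le y' _
  have hWN1 : (1 : ℝ) < ‖w‖ ^ N := one_lt_pow₀ hw (by omega)
  have hfz : Tendsto f atTop (𝓝 0) := by
    have hdiv : Tendsto (fun k : ℕ => k / N) atTop atTop := by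
      refine tendsto_atTop_atTop.2 fun b => ⟨b * N, fun k hk => ?_⟩
      exact (Nat.le_div_iff_mul_le hNpos).2 hk
    have hr1 : (0 : ℝ) ≤ (‖w‖ ^ N)⁻¹ := by positivity
    have hr2 : (‖w‖ ^ N)⁻¹ < 1 := inv_lt_one_of_one_lt₀ hWN1
    have htail : Tendsto (fun k : ℕ => ‖y'‖ * ((‖w‖ ^ N)⁻¹) ^ (k / N)) atTop (𝓝 0) := by
      have := ((tendsto_pow_atTop_nhds_zero_of_lt_one hr1 hr2).comp hdiv).const_mul ‖y'‖
      simpa using this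
    refine squeeze_zero_norm hfbound htail
  set x : C₀(ℕ, 𝕜) := mk0 f hfz with hx
  have hper : (A ^ N) x = x := by
    ext k
    rw [pow_apply hA]
    have h1 : (k + N) % N = k % N := Nat.add_mod_right k N
    have h2 : (k + N) / N = k / N + 1 := Nat.add_div_right k hNpos
    simp only [hx, mk0_apply, hfdef, h1, h2]
    rw [Nat.mul_add, Nat.mul_one, pow_add]
    field_simp
  have hxy' : ‖x - y'‖ ≤ r / 3 := by
    refine norm_le_of _ hε3.le fun k => ?_
    rw [ZeroAtInftyContinuousMap.coe_sub]
    simp only [Pi.sub_apply]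
    by_cases h1 : k < N
    · have : x k = y' k := by
        simp [hx, hfdef, Nat.mod_eq_of_lt h1, Nat.div_eq_of_lt h1]
      simp [this, hε3.le]
    · have hkN : N ≤ k := by omega
      have hy'k : y' k = 0 := by simp [hy', hgdef, Nat.not_le.mpr (by omega : m < k)]
      rw [hy'k, sub_zero]
      have hge : N ≤ N * (k / N) := by
        have : 1 ≤ k / N := (Nat.one_le_div_iff hNpos).2 hkN
        calc N = N * 1 := by ring
          _ ≤ N * (k / N) := by exact Nat.mul_le_mul_left N this
      have : ‖x k‖ ≤ ‖y'‖ / ‖w‖ ^ (N * (k / N)) := by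
        simp only [hx, mk0_apply, hfdef]
        rw [norm_div, norm_pow]
        gcongr
        exact norm_apply_le y' _
      refine le_trans this (le_trans ?_ hy'W)
      have hpow' : ‖w‖ ^ N ≤ ‖w‖ ^ (N * (k / N)) := pow_le_pow_right₀ hw.le hge
      exact div_le_div_of_nonneg_left (norm_nonneg y') (by positivity) hpow'
  refine ⟨x, ?_, ⟨N, by omega, hper⟩⟩
  rw [Metric.mem_ball, dist_eq_norm]
  calc ‖x - y‖ ≤ ‖x - y'‖ + ‖y' - y‖ := by
        have : x - y = (x - y') + (y' - y) := by abel
        rw [this]; exact norm_add_le _ _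
    _ ≤ r / 3 + r / 3 := add_le_add hxy' hy'y
    _ < r := by linarith

/-- `c₀(ℕ, 𝕜)` is separable. -/
lemma separable : TopologicalSpace.SeparableSpace C₀(ℕ, 𝕜) := by
  classical
  set e : ℕ → C₀(ℕ, 𝕜) := fun j =>
    mk0 (fun k => if k = j then (1 : 𝕜) else 0)
      (by
        refine tendsto_const_nhds.congr' ?_
        filter_upwards [eventually_gt_atTop j] with k hk
        simp [Nat.ne_of_gt hk]) with he
  have hsep : TopologicalSpace.IsSeparable (Submodule.span 𝕜 (Set.range e) : Set C₀(ℕ, 𝕜)) :=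
    ((Set.countable_range e).isSeparable).span
  have hdense : Dense (Submodule.span 𝕜 (Set.range e) : Set C₀(ℕ, 𝕜)) := by
    rw [Metric.dense_iff]
    intro x r hr
    have hr2 : 0 < r / 2 := by linarith
    obtain ⟨m, hm⟩ := tail_small x hr2
    set g : ℕ → 𝕜 := fun k => if k ≤ m then x k else 0 with hgdef
    have hgz : Tendsto g atTop (𝓝 0) := by
      refine tendsto_const_nhds.congr' ?_
      filter_upwards [eventually_gt_atTop m] with k hk
      simp [hgdef, Nat.not_le.mpr hk]
    set t : C₀(ℕ, 𝕜) := mk0 g hgz with ht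
    have hsum : t = ∑ j ∈ Finset.range (m + 1), x j • e j := by
      ext k
      have : (∑ j ∈ Finset.range (m + 1), x j • e j) k
          = ∑ j ∈ Finset.range (m + 1), (x j • e j) k :=
        map_sum (evalAM k) (fun j => x j • e j) (Finset.range (m + 1))
      rw [this]
      have : ∀ j, (x j • e j) k = if k = j then x j else 0 := by
        intro j
        have : (x j • e j) k = x j * e j k := rfl
        rw [this]
        simp [he, mul_ite]
      simp only [this, ht, mk0_apply, hgdef]
      rw [Finset.sum_ite_eq (Finset.range (m + 1)) k (fun j => x j)]
      simp [Nat.lt_succ_iff]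
    have htmem : t ∈ Submodule.span 𝕜 (Set.range e) := by
      rw [hsum]
      exact Submodule.sum_mem _ fun j _ =>
        Submodule.smul_mem _ _ (Submodule.subset_span ⟨j, rfl⟩)
    refine ⟨t, ?_, htmem⟩
    rw [Metric.mem_ball, dist_eq_norm]
    have : ‖t - x‖ ≤ r / 2 := by
      refine norm_le_of _ hr2.le fun k => ?_
      rw [ZeroAtInftyContinuousMap.coe_sub]
      simp only [Pi.sub_apply]
      by_cases h1 : k ≤ m
      · simp [ht, hgdef, h1, hr2.le]
      · have : t k = 0 := by simp [ht, hgdef, h1]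
        rw [this]
        simpa using hm k (by omega)
    linarith
  rw [← TopologicalSpace.isSeparable_univ_iff]
  have := hsep.closure
  rwa [hdense.closure_eq] at this

end BBSChaos

set_option synthInstance.maxHeartbeats 1000000 in
set_option maxHeartbeats 1000000 in
/-- For every `w` in `𝕜 = ℝ` or `ℂ` with `‖w‖ > 1`, the bounded weighted
backward shift `A_w` on `c₀`, `(A_w x) k = w * x (k+1)`, is chaotic: it possesses a
hypercyclic vector and its set of periodic points is dense in `c₀`. -/
theorem bounded_backward_shift_chaotic_on_c0
    (𝕜 : Type*) [RCLike 𝕜] (w : 𝕜) (hw : 1 < ‖w‖)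
    (A : C₀(ℕ, 𝕜) →L[𝕜] C₀(ℕ, 𝕜))
    (hA : ∀ (x : C₀(ℕ, 𝕜)) (k : ℕ), A x k = w * x (k + 1)) :
    (∃ x : C₀(ℕ, 𝕜), Dense (Set.range fun n : ℕ => (A ^ n) x)) ∧
      Dense {x : C₀(ℕ, 𝕜) | ∃ N : ℕ, 1 ≤ N ∧ (A ^ N) x = x} := by
  constructor
  · -- hypercyclicity via Baire category
    have : TopologicalSpace.SeparableSpace C₀(ℕ, 𝕜) := BBSChaos.separable
    obtain ⟨u, hu⟩ := TopologicalSpace.exists_dense_seq C₀(ℕ, 𝕜)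
    set F : ℕ × ℕ → Set C₀(ℕ, 𝕜) := fun p =>
      ⋃ n : ℕ, (A ^ n) ⁻¹' Metric.ball (u p.1) (1 / (p.2 + 1)) with hF
    have hFopen : ∀ p, IsOpen (F p) := fun p =>
      isOpen_iUnion fun n => Metric.isOpen_ball.preimage (A ^ n).continuous
    have hFdense : ∀ p, Dense (F p) := by
      intro p
      rw [Metric.dense_iff]
      intro x r hr
      have hq : (0 : ℝ) < 1 / (p.2 + 1) := by positivity
      have hε : 0 < min r (1 / (p.2 + 1)) := lt_min hr hq
      obtain ⟨z, n, hz1, hz2⟩ := BBSChaos.transitive hw hA x (u p.1) hε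
      refine ⟨z, ?_, ?_⟩
      · rw [Metric.mem_ball, dist_eq_norm]
        exact lt_of_lt_of_le hz1 (min_le_left _ _)
      · exact Set.mem_iUnion.2 ⟨n, by
          simp only [Set.mem_preimage, Metric.mem_ball, dist_eq_norm]
          exact lt_of_lt_of_le hz2 (min_le_right _ _)⟩
    have hG : Dense (⋂ p, F p) := dense_iInter_of_isOpen hFopen hFdense
    obtain ⟨x, hx⟩ := hG.nonempty
    refine ⟨x, ?_⟩
    rw [Metric.dense_iff]
    intro y r hr
    obtain ⟨q, hq⟩ := exists_nat_one_div_lt (show (0 : ℝ) < r / 2 by linarith)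
    obtain ⟨i, hi⟩ : ∃ i, dist y (u i) < r / 2 := hu.exists_dist_lt y (by linarith)
    have hxF : x ∈ F (i, q) := Set.mem_iInter.1 hx (i, q)
    obtain ⟨n, hn⟩ := Set.mem_iUnion.1 hxF
    rw [Set.mem_preimage, Metric.mem_ball] at hn
    refine ⟨(A ^ n) x, ?_, ⟨n, rfl⟩⟩
    rw [Metric.mem_ball]
    calc dist ((A ^ n) x) y ≤ dist ((A ^ n) x) (u i) + dist (u i) y := dist_triangle _ _ _
      _ < 1 / (q + 1) + r / 2 := by rw [dist_comm (u i) y]; exact add_lt_add hn hi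
      _ < r / 2 + r / 2 := by linarith
      _ = r := by ring
  · exact BBSChaos.periodic_dense hw hA
end

section
/- For every w ∈ 𝔽 with |w| > 1 and every n ≥ 1, the n-th power A_wⁿ of the bounded weighted backward shift A_w on c₀ is chaotic: A_wⁿ possesses a hypercyclic vector and the set of periodic points of A_wⁿ is dense in c₀. -/
open Filter Topology
open scoped ZeroAtInfty

namespace BBSaux

variable {𝕜 : Type*} [RCLike 𝕜]

/-- Build an element of `C₀(ℕ, 𝕜)` from a sequence tending to zero. -/
noncomputable def mk0 (f : ℕ → 𝕜) (h : Tendsto f atTop (𝓝 0)) : C₀(ℕ, 𝕜) :=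
  ⟨⟨f, continuous_of_discreteTopology⟩, by rwa [cocompact_eq_atTop]⟩

@[simp] lemma mk0_apply (f : ℕ → 𝕜) (h : Tendsto f atTop (𝓝 0)) (k : ℕ) :
    mk0 f h k = f k := rfl

lemma tendsto_zero (f : C₀(ℕ, 𝕜)) : Tendsto (fun i => f i) atTop (𝓝 0) := by
  have := f.zero_at_infty'
  rwa [cocompact_eq_atTop] at this

lemma norm_le_of (f : C₀(ℕ, 𝕜)) {C : ℝ} (hC : 0 ≤ C) (h : ∀ i, ‖f i‖ ≤ C) : ‖f‖ ≤ C := by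
  rw [← ZeroAtInftyContinuousMap.norm_toBCF_eq_norm]
  exact (BoundedContinuousFunction.norm_le hC).2 h

lemma norm_apply_le (f : C₀(ℕ, 𝕜)) (i : ℕ) : ‖f i‖ ≤ ‖f‖ := by
  rw [← ZeroAtInftyContinuousMap.norm_toBCF_eq_norm]
  exact f.toBCF.norm_coe_le_norm i

lemma exists_tail (f : C₀(ℕ, 𝕜)) {ε : ℝ} (hε : 0 < ε) : ∃ K, ∀ i ≥ K, ‖f i‖ < ε := by
  obtain ⟨K, hK⟩ := Metric.tendsto_atTop.1 (tendsto_zero f) ε hε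
  exact ⟨K, fun i hi => by simpa [dist_zero_right] using hK i hi⟩

end BBSaux

open BBSaux

set_option maxHeartbeats 2000000 in
set_option synthInstance.maxHeartbeats 1000000 in
/-- For every `w` with `‖w‖ > 1` and every `n ≥ 1`, the `n`-th power `A_w ^ n`
of the bounded weighted backward shift `A_w` on `c₀` is chaotic: `A_w ^ n` possesses a
hypercyclic vector and the set of periodic points of `A_w ^ n` is dense in `c₀`. -/
theorem bounded_backward_shift_powers_chaotic_on_c0
    (𝕜 : Type*) [RCLike 𝕜] (w : 𝕜) (hw : 1 < ‖w‖)
    (A : C₀(ℕ, 𝕜) →L[𝕜] C₀(ℕ, 𝕜))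
    (hA : ∀ (x : C₀(ℕ, 𝕜)) (k : ℕ), A x k = w * x (k + 1))
    (n : ℕ) (hn : 1 ≤ n) :
    (∃ x : C₀(ℕ, 𝕜), Dense (Set.range fun m : ℕ => ((A ^ n) ^ m) x)) ∧
      Dense {x : C₀(ℕ, 𝕜) | ∃ N : ℕ, 1 ≤ N ∧ ((A ^ n) ^ N) x = x} := by
  classical
  have hw0 : w ≠ 0 := by
    intro h; rw [h, norm_zero] at hw; linarith
  set r : ℝ := ‖w‖⁻¹ with hrdef
  have hr0 : 0 ≤ r := by positivity
  have hr1 : r < 1 := inv_lt_one_of_one_lt₀ hw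
  -- powers of A act as weighted shifts
  have hpow : ∀ (j : ℕ) (x : C₀(ℕ, 𝕜)) (k : ℕ), (A ^ j) x k = w ^ j * x (k + j) := by
    intro j
    induction j with
    | zero => intro x k; simp
    | succ j ih =>
      intro x k
      rw [pow_succ, ContinuousLinearMap.mul_apply, ih, hA, pow_succ]
      ring_nf
  have hpownm : ∀ (m : ℕ) (x : C₀(ℕ, 𝕜)) (k : ℕ),
      ((A ^ n) ^ m) x k = w ^ (n * m) * x (k + n * m) := by
    intro m x k; rw [← pow_mul]; exact hpow (n * m) x k
  have key_tendsto : ∀ C : ℝ, Tendsto (fun m : ℕ => C * r ^ m) atTop (𝓝 0) := fun C => by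
    simpa using (tendsto_pow_atTop_nhds_zero_of_lt_one hr0 hr1).const_mul C
  have hnormpowinv : ∀ j : ℕ, ‖((w : 𝕜) ^ j)⁻¹‖ = r ^ j := fun j => by
    rw [norm_inv, norm_pow, hrdef, inv_pow]
  -- PART 1: density of periodic points
  have hper : Dense {x : C₀(ℕ, 𝕜) | ∃ N : ℕ, 1 ≤ N ∧ ((A ^ n) ^ N) x = x} := by
    rw [Metric.dense_iff]
    intro z ε hε
    obtain ⟨K, hK⟩ := exists_tail z (show (0:ℝ) < ε/4 by positivity)
    obtain ⟨M, hM⟩ := Metric.tendsto_atTop.1 (key_tendsto (‖z‖ + 1)) (ε/4) (by positivity)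
    set N : ℕ := max M K + 1 with hNdef
    have hN1 : 1 ≤ N := by omega
    set L : ℕ := n * N with hLdef
    have hL : 0 < L := by positivity
    have hNL : N ≤ L := Nat.le_mul_of_pos_left N (by omega)
    have hKL : K ≤ L := by omega
    have hML : M ≤ L := by omega
    have hcoef : (‖z‖ + 1) * r ^ L < ε/4 := by
      have h := hM L hML
      rwa [Real.dist_0_eq_abs, abs_of_nonneg (by positivity)] at h
    set g : ℕ → 𝕜 := fun i =>
      ((w : 𝕜) ^ (L * (i / L)))⁻¹ * (if i % L < K then z (i % L) else 0) with hgdef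
    have hgbound : ∀ i, ‖g i‖ ≤ (‖z‖ + 1) * r ^ (L * (i / L)) := by
      intro i
      have h1 : ‖(if i % L < K then z (i % L) else 0 : 𝕜)‖ ≤ ‖z‖ + 1 := by
        split
        · exact le_trans (norm_apply_le z _) (by linarith)
        · simp
          positivity
      have : ‖g i‖ = r ^ (L * (i / L)) * ‖(if i % L < K then z (i % L) else 0 : 𝕜)‖ := by
        rw [hgdef, norm_mul, hnormpowinv]
      rw [this, mul_comm]
      exact mul_le_mul_of_nonneg_right h1 (by positivity)
    have hgt : Tendsto g atTop (𝓝 0) := by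
      apply squeeze_zero_norm hgbound
      have hdiv : Tendsto (fun i : ℕ => i / L) atTop atTop :=
        tendsto_atTop_atTop.2 fun b => ⟨b * L, fun i hi => (Nat.le_div_iff_mul_le hL).2 hi⟩
      have h2 : Tendsto (fun j : ℕ => (‖z‖ + 1) * (r ^ L) ^ j) atTop (𝓝 0) := by
        simpa using (tendsto_pow_atTop_nhds_zero_of_lt_one (by positivity)
          (pow_lt_one₀ hr0 hr1 (by omega))).const_mul (‖z‖ + 1)
      have h3 := h2.comp hdiv
      simpa [Function.comp_def, pow_mul] using h3
    set x : C₀(ℕ, 𝕜) := mk0 g hgt with hxdef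
    have hxper : ((A ^ n) ^ N) x = x := by
      apply ZeroAtInftyContinuousMap.ext
      intro i
      rw [hpownm N x i]
      show w ^ L * g (i + L) = g i
      have hwL : (w : 𝕜) ^ L ≠ 0 := pow_ne_zero _ hw0
      rw [hgdef]
      simp only [Nat.add_div_right i hL, Nat.add_mod_right]
      rw [Nat.mul_add, mul_one, pow_add, mul_inv, ← mul_assoc, ← mul_assoc,
        mul_comm (w ^ L) ((w ^ (L * (i / L)))⁻¹), mul_assoc ((w ^ (L * (i / L)))⁻¹),
        mul_inv_cancel₀ hwL, mul_one]
    have hxz : ∀ i, ‖x i - z i‖ ≤ ε/2 := by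
      intro i
      rcases lt_or_ge i L with hiL | hiL
      · have hdiv0 : i / L = 0 := Nat.div_eq_of_lt hiL
        have hmod : i % L = i := Nat.mod_eq_of_lt hiL
        show ‖g i - z i‖ ≤ ε/2
        rw [hgdef]
        simp only [hdiv0, hmod, Nat.mul_zero, pow_zero, inv_one, one_mul]
        split
        · simp
          positivity
        · next h =>
          rw [zero_sub, norm_neg]
          have := hK i (le_of_not_gt h)
          linarith
      · have hdivpos : 1 ≤ i / L := (Nat.one_le_div_iff hL).2 hiL
        have h1 : ‖x i‖ ≤ ε/4 := by
          have hb := hgbound i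
          have hexp : L ≤ L * (i / L) := Nat.le_mul_of_pos_right L (by omega)
          have hmon : r ^ (L * (i / L)) ≤ r ^ L :=
            pow_le_pow_of_le_one hr0 (le_of_lt hr1) hexp
          have : (‖z‖ + 1) * r ^ (L * (i / L)) ≤ (‖z‖ + 1) * r ^ L :=
            mul_le_mul_of_nonneg_left hmon (by positivity)
          show ‖g i‖ ≤ ε/4
          linarith
        have h2 : ‖z i‖ < ε/4 := hK i (le_trans hKL hiL)
        calc ‖x i - z i‖ ≤ ‖x i‖ + ‖z i‖ := norm_sub_le _ _
          _ ≤ ε/2 := by linarith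
    have hdist : dist x z < ε := by
      rw [dist_eq_norm]
      have : ‖x - z‖ ≤ ε/2 := by
        apply norm_le_of _ (by positivity)
        intro i
        have := hxz i
        simpa [ZeroAtInftyContinuousMap.coe_sub, Pi.sub_apply] using this
      linarith
    exact ⟨x, Metric.mem_ball.2 hdist, ⟨N, hN1, hxper⟩⟩
  -- PART 2: existence of a hypercyclic vector
  obtain ⟨d, hd⟩ := TopologicalSpace.exists_dense_seq 𝕜
  -- finitely supported approximants with values in the countable dense set
  have hYex : ∀ p : (Σ K : ℕ, Fin K → ℕ), ∃ y : C₀(ℕ, 𝕜),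
      ∀ i, y i = if h : i < p.1 then d (p.2 ⟨i, h⟩) else 0 := by
    intro p
    refine ⟨mk0 (fun i => if h : i < p.1 then d (p.2 ⟨i, h⟩) else 0) ?_, fun i => rfl⟩
    refine Tendsto.congr' ?_ tendsto_const_nhds
    filter_upwards [eventually_ge_atTop p.1] with i hi
    rw [dif_neg (by omega)]
  choose Y hY using hYex
  set U : ((Σ K : ℕ, Fin K → ℕ) × ℕ) → Set C₀(ℕ, 𝕜) := fun p =>
    ⋃ m : ℕ, ((A ^ n) ^ m) ⁻¹' Metric.ball (Y p.1) (1 / (p.2 + 1)) with hUdef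
  have hopen : ∀ p, IsOpen (U p) := fun p =>
    isOpen_iUnion fun m => Metric.isOpen_ball.preimage (ContinuousLinearMap.continuous _)
  have hUdense : ∀ p, Dense (U p) := by
    intro p
    rw [Metric.dense_iff]
    intro z ε hε
    set yp : C₀(ℕ, 𝕜) := Y p.1 with hypdef
    obtain ⟨K₁, hK₁⟩ := exists_tail z (show (0:ℝ) < ε/3 by positivity)
    obtain ⟨M, hM⟩ := Metric.tendsto_atTop.1 (key_tendsto (‖yp‖ + 1)) (ε/3) (by positivity)
    set m : ℕ := max M K₁ + 1 with hmdef
    set L : ℕ := n * m with hLdef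
    have hL : 0 < L := by positivity
    have hmL : m ≤ L := Nat.le_mul_of_pos_left m (by omega)
    have hK₁L : K₁ ≤ L := by omega
    have hML : M ≤ L := by omega
    have hcoef : (‖yp‖ + 1) * r ^ L < ε/3 := by
      have h := hM L hML
      rwa [Real.dist_0_eq_abs, abs_of_nonneg (by positivity)] at h
    set f : ℕ → 𝕜 := fun i => if i < L then z i else ((w : 𝕜) ^ L)⁻¹ * yp (i - L) with hfdef
    have hft : Tendsto f atTop (𝓝 0) := by
      have h1 : Tendsto (fun i : ℕ => yp (i - L)) atTop (𝓝 0) :=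
        (tendsto_zero yp).comp (tendsto_sub_atTop_nat L)
      have h2 : Tendsto (fun i : ℕ => ((w : 𝕜) ^ L)⁻¹ * yp (i - L)) atTop (𝓝 0) := by
        simpa using h1.const_mul (((w : 𝕜) ^ L)⁻¹)
      refine h2.congr' ?_
      filter_upwards [eventually_ge_atTop L] with i hi
      rw [hfdef]
      simp only [if_neg (by omega : ¬ i < L)]
    set x : C₀(ℕ, 𝕜) := mk0 f hft with hxdef
    have hhit : ((A ^ n) ^ m) x = yp := by
      apply ZeroAtInftyContinuousMap.ext
      intro k
      rw [hpownm m x k]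
      show w ^ L * f (k + L) = yp k
      rw [hfdef]
      simp only [if_neg (by omega : ¬ k + L < L), Nat.add_sub_cancel]
      rw [← mul_assoc, mul_inv_cancel₀ (pow_ne_zero _ hw0), one_mul]
    have hxU : x ∈ U p := by
      rw [hUdef]
      refine Set.mem_iUnion.2 ⟨m, ?_⟩
      simp only [Set.mem_preimage, hhit, Metric.mem_ball, dist_self]
      rw [hypdef, dist_self]
      positivity
    have hxz : ∀ i, ‖x i - z i‖ ≤ 2 * ε / 3 := by
      intro i
      rcases lt_or_ge i L with hiL | hiL
      · show ‖f i - z i‖ ≤ 2 * ε / 3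
        rw [hfdef]
        simp only [if_pos hiL, sub_self, norm_zero]
        positivity
      · have h1 : ‖x i‖ ≤ ε/3 := by
          show ‖f i‖ ≤ ε/3
          rw [hfdef]
          simp only [if_neg (by omega : ¬ i < L)]
          rw [norm_mul, hnormpowinv]
          have hb : ‖yp (i - L)‖ ≤ ‖yp‖ + 1 := le_trans (norm_apply_le yp _) (by linarith)
          have : r ^ L * ‖yp (i - L)‖ ≤ r ^ L * (‖yp‖ + 1) :=
            mul_le_mul_of_nonneg_left hb (by positivity)
          nlinarith [pow_nonneg hr0 L]
        have h2 : ‖z i‖ < ε/3 := hK₁ i (le_trans hK₁L hiL)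
        calc ‖x i - z i‖ ≤ ‖x i‖ + ‖z i‖ := norm_sub_le _ _
          _ ≤ 2 * ε / 3 := by linarith
    have hdist : dist x z < ε := by
      rw [dist_eq_norm]
      have : ‖x - z‖ ≤ 2 * ε / 3 := by
        apply norm_le_of _ (by positivity)
        intro i
        have := hxz i
        simpa [ZeroAtInftyContinuousMap.coe_sub, Pi.sub_apply] using this
      linarith
    exact ⟨x, Metric.mem_ball.2 hdist, hxU⟩
  have hbig : Dense (⋂ p, U p) := dense_iInter_of_isOpen hopen hUdense
  have hne : Nonempty C₀(ℕ, 𝕜) := ⟨0⟩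
  obtain ⟨x, hx⟩ := hbig.nonempty
  refine ⟨⟨x, ?_⟩, hper⟩
  rw [Metric.dense_iff]
  intro z ε hε
  obtain ⟨s, hs⟩ := exists_nat_one_div_lt (show (0:ℝ) < ε/2 by positivity)
  obtain ⟨K, hK⟩ := exists_tail z (show (0:ℝ) < ε/4 by positivity)
  have hchoose : ∀ i : Fin K, ∃ j : ℕ, dist (z i) (d j) < ε/4 := fun i =>
    Metric.denseRange_iff.1 hd (z i) (ε/4) (by positivity)
  choose c hc using hchoose
  set p : ((Σ K : ℕ, Fin K → ℕ) × ℕ) := (⟨K, c⟩, s) with hpdef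
  have hyz : dist (Y ⟨K, c⟩) z ≤ ε/4 := by
    rw [dist_eq_norm]
    apply norm_le_of _ (by positivity)
    intro i
    have hcoord : (Y ⟨K, c⟩ - z) i = Y ⟨K, c⟩ i - z i := by
      simp [ZeroAtInftyContinuousMap.coe_sub, Pi.sub_apply]
    rw [hcoord, hY ⟨K, c⟩ i]
    rcases lt_or_ge i K with hiK | hiK
    · rw [dif_pos hiK]
      have := hc ⟨i, hiK⟩
      rw [dist_eq_norm] at this
      rw [← norm_neg]
      simp only [neg_sub]
      exact le_of_lt this
    · rw [dif_neg (not_lt.2 hiK), zero_sub, norm_neg]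
      exact le_of_lt (hK i hiK)
  have hxp : x ∈ U p := Set.mem_iInter.1 hx p
  rw [hUdef] at hxp
  obtain ⟨m, hm⟩ := Set.mem_iUnion.1 hxp
  rw [Set.mem_preimage, Metric.mem_ball] at hm
  refine ⟨((A ^ n) ^ m) x, Metric.mem_ball.2 ?_, Set.mem_range_self m⟩
  have hrad : (1 : ℝ) / ((p.2 : ℝ) + 1) < ε/2 := by
    rw [hpdef]
    exact_mod_cast hs
  calc dist (((A ^ n) ^ m) x) z ≤ dist (((A ^ n) ^ m) x) (Y p.1) + dist (Y p.1) z :=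
        dist_triangle _ _ _
    _ < ε/2 + ε/4 := by
        refine add_lt_add_of_lt_of_le (lt_trans hm hrad) ?_
        rw [hpdef]
        exact hyz
    _ < ε := by linarith
end

section
/- For every w ∈ 𝔽 with |w| > 1, the unbounded weighted backward shift A_w in c₀ is chaotic: there exists x ∈ C^∞(A_w) = ⋂_{n≥1} D(A_wⁿ) whose orbit {A_wⁿ x : n ≥ 0} is dense in c₀, and the set of periodic points of A_w is dense in c₀. -/
open Filter Topology

/-- Sequences vanishing at infinity (the space `c₀`, here as a set of raw sequences;
the Lean index `k` corresponds to the paper's index `k + 1`). -/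
def c0Set (𝕜 : Type*) [RCLike 𝕜] : Set (ℕ → 𝕜) :=
  {x | Tendsto x atTop (nhds (0 : 𝕜))}

/-- The action of the `n`-th power `A_wⁿ` of the unbounded weighted backward shift
(`powAct w 0 = id`, `powAct w 1` is the action of `A_w` itself):
`(A_wⁿ x)_k = (∏_{j=k}^{k+n-1} w^j) x_{k+n}` for the paper's `1`-based index `k ≥ 1`,
i.e. `(A_wⁿ x) k = (∏_{j=k+1}^{k+n} w^j) * x (k+n)` in `0`-based indexing. -/
def powAct {𝕜 : Type*} [RCLike 𝕜] (w : 𝕜) (n : ℕ) (x : ℕ → 𝕜) : ℕ → 𝕜 :=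
  fun k => (∏ j ∈ Finset.Ico (k + 1) (k + n + 1), w ^ j) * x (k + n)

/-- The maximal domain `D(A_wⁿ) = {x ∈ c₀ : A_wⁿ x ∈ c₀}`. -/
def powDom {𝕜 : Type*} [RCLike 𝕜] (w : 𝕜) (n : ℕ) : Set (ℕ → 𝕜) :=
  {x | x ∈ c0Set 𝕜 ∧ powAct w n x ∈ c0Set 𝕜}

/-- The sup-norm `‖x‖_∞ = sup_k |x_k|` of a sequence. -/
noncomputable def supNorm {𝕜 : Type*} [RCLike 𝕜] (f : ℕ → 𝕜) : ℝ :=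
  ⨆ k, ‖f k‖

/-! ### Auxiliary arithmetic lemmas -/

/-- The exponent sum `S k n = ∑_{j=k+1}^{k+n} j`. -/
def Sn (k n : ℕ) : ℕ := ∑ j ∈ Finset.Ico (k+1) (k+n+1), j

lemma Sn_eq (k n : ℕ) : Sn k n = n * k + Sn 0 n := by
  unfold Sn
  rw [Finset.sum_Ico_eq_sum_range, Finset.sum_Ico_eq_sum_range]
  have h1 : k + n + 1 - (k+1) = n := by omega
  have h2 : 0 + n + 1 - (0+1) = n := by omega
  rw [h1, h2]
  have h3 : ∀ i, k + 1 + i = k + (0 + 1 + i) := by omega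
  simp only [h3]
  rw [Finset.sum_add_distrib]
  simp [mul_comm]

lemma two_mul_Sn_zero (n : ℕ) : 2 * Sn 0 n = n * (n+1) := by
  unfold Sn
  induction n with
  | zero => simp
  | succ m ih =>
      rw [show 0 + (m+1) + 1 = (0 + m + 1) + 1 by omega,
        Finset.sum_Ico_succ_top (by omega)]
      ring_nf
      ring_nf at ih
      omega

lemma Sn_zero_le (n : ℕ) : Sn 0 n ≤ n * n := by
  have := two_mul_Sn_zero n; nlinarith

lemma le_Sn_zero (n : ℕ) : n ≤ Sn 0 n := by
  have := two_mul_Sn_zero n; nlinarith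

lemma powAct_eq {𝕜 : Type*} [RCLike 𝕜] (w : 𝕜) (n : ℕ) (x : ℕ → 𝕜) (k : ℕ) :
    powAct w n x k = w ^ Sn k n * x (k + n) := by
  unfold powAct Sn
  rw [Finset.prod_pow_eq_pow_sum]

lemma supNorm_lt_of {𝕜 : Type*} [RCLike 𝕜] {f : ℕ → 𝕜} {ε : ℝ}
    (hε : 0 < ε) (h : ∀ k, ‖f k‖ ≤ ε/2) : supNorm f < ε :=
  lt_of_le_of_lt (ciSup_le h) (by linarith)

lemma mem_c0_iff {𝕜 : Type*} [RCLike 𝕜] {x : ℕ → 𝕜} :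
    x ∈ c0Set 𝕜 ↔ ∀ ε > (0:ℝ), ∃ K, ∀ k ≥ K, ‖x k‖ < ε := by
  constructor
  · intro h ε hε
    exact eventually_atTop.mp ((NormedAddCommGroup.tendsto_nhds_zero.mp h) ε hε)
  · intro h
    refine NormedAddCommGroup.tendsto_nhds_zero.mpr fun ε hε => ?_
    obtain ⟨K, hK⟩ := h ε hε
    exact eventually_atTop.mpr ⟨K, hK⟩

/-! ### The placement sequence for the hypercyclic vector -/

/-- The rapidly growing placement sequence. -/
def nseq (L D : ℕ → ℕ) : ℕ → ℕ
  | 0 => 1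
  | m+1 => (nseq L D m + L (m+1) + D (m+1) + L m + 6)^2

lemma nseq_gap (L D : ℕ → ℕ) (m : ℕ) : nseq L D m + L m ≤ nseq L D (m+1) := by
  show nseq L D m + L m ≤ (nseq L D m + L (m+1) + D (m+1) + L m + 6)^2
  nlinarith [Nat.zero_le (nseq L D m), Nat.zero_le (L m), Nat.zero_le (L (m+1)),
    Nat.zero_le (D (m+1))]

lemma nseq_mono (L D : ℕ → ℕ) : Monotone (nseq L D) :=
  monotone_nat_of_le_succ fun m => le_trans (Nat.le_add_right _ _) (nseq_gap L D m)

lemma lt_nseq (L D : ℕ → ℕ) (m : ℕ) : m < nseq L D m := by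
  induction m with
  | zero => exact Nat.zero_lt_one
  | succ t ih =>
      have hce : nseq L D (t+1) = (nseq L D t + L (t+1) + D (t+1) + L t + 6)^2 := rfl
      have hc : nseq L D t + L (t+1) + D (t+1) + L t + 6 ≤
          (nseq L D t + L (t+1) + D (t+1) + L t + 6)^2 := by
        nlinarith [Nat.zero_le (nseq L D t + L (t+1) + D (t+1) + L t)]
      omega

lemma D_le_nseq (L D : ℕ → ℕ) (t : ℕ) : D (t+1) ≤ nseq L D (t+1) := by
  show D (t+1) ≤ (nseq L D t + L (t+1) + D (t+1) + L t + 6)^2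
  nlinarith [Nat.zero_le (nseq L D t), Nat.zero_le (L t), Nat.zero_le (L (t+1)),
    Nat.zero_le (D (t+1))]

lemma nseq_gapIneq (L D : ℕ → ℕ) (t : ℕ) :
    2 * (nseq L D t * (nseq L D (t+1) + L (t+1)) + D (t+1)) ≤
      nseq L D (t+1) * nseq L D (t+1) := by
  set c := nseq L D t + L (t+1) + D (t+1) + L t + 6 with hc
  have hN : nseq L D (t+1) = c^2 := rfl
  have hc6 : 6 ≤ c := by omega
  have h1 : nseq L D t ≤ c := by omega
  have h2 : L (t+1) ≤ c := by omega
  have h3 : D (t+1) ≤ c := by omega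
  rw [hN]
  calc 2 * (nseq L D t * (c^2 + L (t+1)) + D (t+1))
      ≤ 2 * (c * (c^2 + c) + c) := by
        have : nseq L D t * (c^2 + L (t+1)) ≤ c * (c^2 + c) :=
          Nat.mul_le_mul h1 (by omega)
        omega
    _ ≤ c^2 * c^2 := by nlinarith

/-- The key natural-number exponent inequality. -/
lemma key_nat (L D : ℕ → ℕ) {a m k k' : ℕ} (hm : 1 ≤ m) (ha : a ≤ nseq L D (m-1))
    (heq : k + a = nseq L D m + k') (hk' : k' < L m) :
    Sn k a + D m ≤ Sn k' (nseq L D m) := by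
  obtain ⟨t, rfl⟩ : ∃ t, m = t + 1 := ⟨m - 1, by omega⟩
  have ha' : a ≤ nseq L D t := by simpa using ha
  have h1 : Sn k a ≤ a * (k + a) := by
    rw [Sn_eq]
    have := Sn_zero_le a
    nlinarith
  have h2 : a * (k + a) ≤ nseq L D t * (nseq L D (t+1) + L (t+1)) := by
    rw [heq]
    exact Nat.mul_le_mul ha' (by omega)
  have h3 : nseq L D (t+1) * nseq L D (t+1) ≤ 2 * Sn k' (nseq L D (t+1)) := by
    have h4 : Sn 0 (nseq L D (t+1)) ≤ Sn k' (nseq L D (t+1)) := by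
      rw [Sn_eq k']; exact Nat.le_add_left _ _
    have := two_mul_Sn_zero (nseq L D (t+1))
    nlinarith
  have := nseq_gapIneq L D t
  omega

open Classical in
noncomputable def hcx {𝕜 : Type*} [RCLike 𝕜] (w : 𝕜) (blk : ℕ → ℕ → 𝕜) (n L : ℕ → ℕ) :
    ℕ → 𝕜 :=
  fun j => if h : ∃ m, n m ≤ j ∧ j < n m + L m then
    blk h.choose (j - n h.choose) * (w ^ Sn (j - n h.choose) (n h.choose))⁻¹ else 0

lemma block_unique {n L : ℕ → ℕ} (hgap : ∀ m, n m + L m ≤ n (m+1)) (hmono : Monotone n)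
    {j m m' : ℕ} (h : n m ≤ j ∧ j < n m + L m) (h' : n m' ≤ j ∧ j < n m' + L m') :
    m = m' := by
  rcases lt_trichotomy m m' with hlt | he | hgt
  · exfalso
    have : n m + L m ≤ n m' := le_trans (hgap m) (hmono hlt)
    omega
  · exact he
  · exfalso
    have : n m' + L m' ≤ n m := le_trans (hgap m') (hmono hgt)
    omega

lemma hcx_block {𝕜 : Type*} [RCLike 𝕜] (w : 𝕜) (blk : ℕ → ℕ → 𝕜) {n L : ℕ → ℕ}
    (hgap : ∀ m, n m + L m ≤ n (m+1)) (hmono : Monotone n)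
    {m k : ℕ} (hk : k < L m) :
    hcx w blk n L (n m + k) = blk m k * (w ^ Sn k (n m))⁻¹ := by
  have hP : ∃ m', n m' ≤ n m + k ∧ n m + k < n m' + L m' :=
    ⟨m, Nat.le_add_right _ _, by omega⟩
  have hPm : n m ≤ n m + k ∧ n m + k < n m + L m := ⟨Nat.le_add_right _ _, by omega⟩
  have hme : hP.choose = m := block_unique hgap hmono hP.choose_spec hPm
  rw [hcx, dif_pos hP]
  simp only [hme, Nat.add_sub_cancel_left]

lemma hcx_cases {𝕜 : Type*} [RCLike 𝕜] (w : 𝕜) (blk : ℕ → ℕ → 𝕜) (n L : ℕ → ℕ) (j : ℕ) :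
    hcx w blk n L j = 0 ∨ ∃ m, (n m ≤ j ∧ j < n m + L m) ∧
      hcx w blk n L j = blk m (j - n m) * (w ^ Sn (j - n m) (n m))⁻¹ := by
  by_cases h : ∃ m, n m ≤ j ∧ j < n m + L m
  · exact Or.inr ⟨h.choose, h.choose_spec, by rw [hcx, dif_pos h]⟩
  · exact Or.inl (by rw [hcx, dif_neg h])

/-! ### The dense set of periodic points -/

lemma periodic_dense {𝕜 : Type*} [RCLike 𝕜] (w : 𝕜) (hw : 1 < ‖w‖) :
    ∀ y ∈ c0Set 𝕜, ∀ ε > (0 : ℝ),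
      ∃ x : ℕ → 𝕜, (∃ N : ℕ, 1 ≤ N ∧ x ∈ powDom w N ∧ powAct w N x = x) ∧
        supNorm (x - y) < ε := by
  intro y hy ε hε
  have hr0 : (0:ℝ) < ‖w‖ := lt_trans one_pos hw
  have hw0 : w ≠ 0 := by
    intro h; rw [h, norm_zero] at hr0; exact lt_irrefl 0 hr0
  -- global bound for y
  obtain ⟨C₀, hC₀mem⟩ := (hy.norm.bddAbove_range : BddAbove (Set.range fun k => ‖y k‖))
  have hC₀ : ∀ k, ‖y k‖ ≤ C₀ := fun k => hC₀mem ⟨k, rfl⟩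
  have hC₀0 : 0 ≤ C₀ := le_trans (norm_nonneg _) (hC₀ 0)
  -- tail bound for y
  obtain ⟨M, hM⟩ := mem_c0_iff.mp hy (ε/4) (by positivity)
  -- choose the period N
  obtain ⟨N₁, hN₁⟩ := pow_unbounded_of_one_lt (C₀ / (ε/4)) hw
  set N := max (max M 1) N₁ with hNdef
  have hN0 : 0 < N := lt_of_lt_of_le one_pos (le_trans (le_max_right M 1) (le_max_left _ _))
  have hNM : M ≤ N := le_trans (le_max_left M 1) (le_max_left _ _)
  have hCN : C₀ ≤ ε/4 * ‖w‖^N := by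
    have h1 : C₀ / (ε/4) < ‖w‖ ^ N :=
      lt_of_lt_of_le hN₁ (pow_le_pow_right₀ hw.le (le_max_right _ _))
    have h2 : (0:ℝ) < ε/4 := by positivity
    rw [div_lt_iff₀ h2] at h1
    nlinarith
  -- the periodic point
  set yt : ℕ → 𝕜 := fun k => if k < N then y k else 0 with hytdef
  set E : ℕ → ℕ := fun j => ∑ i ∈ Finset.range (j / N), Sn (j % N + i * N) N with hEdef
  set x : ℕ → 𝕜 := fun j => yt (j % N) * (w ^ E j)⁻¹ with hxdef
  have hyt : ∀ k, ‖yt k‖ ≤ C₀ := by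
    intro k
    rw [hytdef]
    by_cases h : k < N
    · simpa [h] using hC₀ k
    · simp [h, hC₀0]
  have hEbound : ∀ j, j / N * N ≤ E j := by
    intro j
    rw [hEdef]
    have hterm : ∀ i : ℕ, N ≤ Sn (j % N + i * N) N := by
      intro i
      have h1 := le_Sn_zero N
      have h2 : Sn (j % N + i * N) N = N * (j % N + i * N) + Sn 0 N := Sn_eq _ _
      omega
    have := Finset.card_nsmul_le_sum (Finset.range (j / N))
      (fun i => Sn (j % N + i * N) N) N (fun i _ => hterm i)
    simpa [mul_comm] using this
  have hxnorm : ∀ j, ‖x j‖ ≤ C₀ / ‖w‖ ^ (j / N * N) := by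
    intro j
    rw [hxdef]
    simp only [norm_mul, norm_inv, norm_pow]
    have h1 : ‖yt (j % N)‖ * (‖w‖ ^ E j)⁻¹ ≤ C₀ * (‖w‖ ^ E j)⁻¹ :=
      mul_le_mul_of_nonneg_right (hyt _) (by positivity)
    refine le_trans h1 ?_
    rw [← div_eq_mul_inv]
    have h2 : ‖w‖ ^ (j / N * N) ≤ ‖w‖ ^ E j := pow_le_pow_right₀ hw.le (hEbound j)
    exact div_le_div_of_nonneg_left hC₀0 (pow_pos hr0 _) h2
  -- periodicity
  have hper : powAct w N x = x := by
    funext k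
    rw [powAct_eq]
    have hmod : (k + N) % N = k % N := Nat.add_mod_right k N
    have hdiv : (k + N) / N = k / N + 1 := Nat.add_div_right k hN0
    rw [hxdef]
    simp only [hEdef, hmod, hdiv, Finset.sum_range_succ, Nat.mod_add_div' k N]
    rw [pow_add, mul_inv]
    have hp1 : (w : 𝕜) ^ Sn k N ≠ 0 := pow_ne_zero _ hw0
    field_simp
  -- x ∈ c₀
  have hxc0 : x ∈ c0Set 𝕜 := by
    rw [mem_c0_iff]
    intro δ hδ
    obtain ⟨Q, hQ⟩ := pow_unbounded_of_one_lt (C₀ / δ) hw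
    refine ⟨(Q+1) * N, fun j hj => ?_⟩
    have hQj : Q + 1 ≤ j / N := (Nat.le_div_iff_mul_le hN0).mpr hj
    have h1 : ‖x j‖ ≤ C₀ / ‖w‖ ^ (j / N * N) := hxnorm j
    have h2 : ‖w‖ ^ Q < ‖w‖ ^ (j / N * N) := by
      apply pow_lt_pow_right₀ hw
      have : 1 ≤ N := hN0
      nlinarith
    have h3 : C₀ / ‖w‖ ^ (j / N * N) < δ := by
      rw [div_lt_iff₀ (by positivity)]
      rw [div_lt_iff₀ hδ] at hQ
      nlinarith [pow_pos hr0 Q, pow_pos hr0 (j / N * N)]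
    exact lt_of_le_of_lt h1 h3
  refine ⟨x, ⟨N, hN0, ⟨hxc0, by rw [hper]; exact hxc0⟩, hper⟩, ?_⟩
  apply supNorm_lt_of hε
  intro j
  rw [Pi.sub_apply]
  by_cases hj : j < N
  · have hxj : x j = y j := by
      rw [hxdef]
      simp only [hEdef, Nat.mod_eq_of_lt hj, Nat.div_eq_of_lt hj]
      simp [hytdef, hj]
    rw [hxj]
    simp
    positivity
  · push_neg at hj
    have h1 : ‖x j‖ ≤ ε/4 := by
      refine le_trans (hxnorm j) ?_
      have hq1 : 1 ≤ j / N := (Nat.le_div_iff_mul_le hN0).mpr (by omega)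
      have h2 : ‖w‖ ^ N ≤ ‖w‖ ^ (j / N * N) := pow_le_pow_right₀ hw.le (by nlinarith)
      rw [div_le_iff₀ (by positivity)]
      calc C₀ ≤ ε/4 * ‖w‖^N := hCN
        _ ≤ ε/4 * ‖w‖ ^ (j / N * N) := by nlinarith
    have h2 : ‖y j‖ ≤ ε/4 := le_of_lt (hM j (le_trans hNM hj))
    calc ‖x j - y j‖ ≤ ‖x j‖ + ‖y j‖ := norm_sub_le _ _
      _ ≤ ε/4 + ε/4 := add_le_add h1 h2
      _ = ε/2 := by ring
/-- For every `w` with `‖w‖ > 1`, the unbounded weighted backward shift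
`A_w` in `c₀` is chaotic: there exists `x ∈ C^∞(A_w) = ⋂_{n ≥ 1} D(A_wⁿ)` whose orbit
`{A_wⁿ x : n ≥ 0}` is dense in `c₀` (w.r.t. the sup-norm), and the set of periodic points
of `A_w` is dense in `c₀`. -/
theorem unbounded_backward_shift_chaotic
    (𝕜 : Type*) [RCLike 𝕜] (w : 𝕜) (hw : 1 < ‖w‖) :
    (∃ x : ℕ → 𝕜, (∀ n : ℕ, 1 ≤ n → x ∈ powDom w n) ∧
      ∀ y ∈ c0Set 𝕜, ∀ ε > (0 : ℝ), ∃ n : ℕ, supNorm (powAct w n x - y) < ε) ∧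
    (∀ y ∈ c0Set 𝕜, ∀ ε > (0 : ℝ),
      ∃ x : ℕ → 𝕜, (∃ N : ℕ, 1 ≤ N ∧ x ∈ powDom w N ∧ powAct w N x = x) ∧
        supNorm (x - y) < ε) := by
  refine ⟨?_, periodic_dense w hw⟩
  have hr0 : (0:ℝ) < ‖w‖ := lt_trans one_pos hw
  have hw0 : w ≠ 0 := by
    intro h; rw [h, norm_zero] at hr0; exact lt_irrefl 0 hr0
  have hhalf0 : (0:ℝ) ≤ 1/2 := by norm_num
  have hhalf1 : (1:ℝ)/2 ≤ 1 := by norm_num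
  -- a dense sequence in 𝕜
  obtain ⟨d, hd⟩ : ∃ d : ℕ → 𝕜, DenseRange d :=
    ⟨TopologicalSpace.denseSeq 𝕜, TopologicalSpace.denseRange_denseSeq 𝕜⟩
  -- the blocks
  obtain ⟨listEnc, hlistEnc⟩ : ∃ f : ℕ → List ℕ,
      f = fun m => Denumerable.ofNat (List ℕ) (Nat.unpair m).2 := ⟨_, rfl⟩
  obtain ⟨L, hLdef⟩ : ∃ L : ℕ → ℕ, L = fun m => (listEnc m).length := ⟨_, rfl⟩
  obtain ⟨blk, hblkdef⟩ : ∃ blk : ℕ → ℕ → 𝕜,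
      blk = fun m k => ((listEnc m).map d).getD k 0 := ⟨_, rfl⟩
  obtain ⟨B, hBdef⟩ : ∃ B : ℕ → ℝ,
      B = fun m => ((listEnc m).map fun i => ‖d i‖).sum := ⟨_, rfl⟩
  have hB0 : ∀ m, 0 ≤ B m := by
    intro m
    rw [hBdef]
    refine List.sum_nonneg fun z hz => ?_
    obtain ⟨i, _, rfl⟩ := List.mem_map.mp hz
    exact norm_nonneg _
  have hblkB : ∀ m k, ‖blk m k‖ ≤ B m := by
    intro m k
    simp only [hblkdef, hBdef]
    by_cases hk : k < ((listEnc m).map d).length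
    · rw [List.getD_eq_getElem _ _ hk]
      rw [List.getElem_map]
      refine List.single_le_sum (fun z hz => ?_) _ ?_
      · obtain ⟨i, _, rfl⟩ := List.mem_map.mp hz
        exact norm_nonneg _
      · exact List.mem_map_of_mem (List.getElem_mem _)
    · push_neg at hk
      rw [List.getD_eq_default _ _ hk, norm_zero]
      have := hB0 m
      rw [hBdef] at this
      exact this
  have hblk0 : ∀ m k, L m ≤ k → blk m k = 0 := by
    intro m k hk
    rw [hblkdef]
    refine List.getD_eq_default _ _ ?_
    rw [List.length_map]
    rw [hLdef] at hk
    exact hk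
  -- the compensating exponents
  choose D hD using fun m => pow_unbounded_of_one_lt (B m * 2 ^ m) hw
  -- the placement sequence and hypercyclic vector
  set ns : ℕ → ℕ := nseq L D with hnsdef
  have hgap : ∀ m, ns m + L m ≤ ns (m+1) := nseq_gap L D
  have hmono : Monotone ns := nseq_mono L D
  set x : ℕ → 𝕜 := hcx w blk ns L with hxdef
  -- B m ≤ ‖w‖^(D m) * (1/2)^m
  have hB2 : ∀ m, B m ≤ ‖w‖ ^ D m * (1/2:ℝ)^m := by
    intro m
    have h2m : (0:ℝ) < 2^m := by positivity
    have : (1/2:ℝ)^m = (2^m)⁻¹ := by rw [one_div, inv_pow]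
    rw [this, ← div_eq_mul_inv, le_div_iff₀ h2m]
    exact (hD m).le
  -- the key estimate
  have keyB : ∀ a m k k', 1 ≤ m → a ≤ ns (m-1) → k + a = ns m + k' → k' < L m →
      ‖w‖ ^ Sn k a * ‖x (k + a)‖ ≤ (1/2 : ℝ) ^ m := by
    intro a m k k' hm ha heq hk'
    have hxv : x (k + a) = blk m k' * (w ^ Sn k' (ns m))⁻¹ := by
      rw [heq, hxdef]; exact hcx_block w blk hgap hmono hk'
    rw [hxv, norm_mul, norm_inv, norm_pow]
    have hkey := key_nat L D hm ha heq hk'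
    have h1 : ‖w‖ ^ Sn k a * ‖w‖ ^ D m ≤ ‖w‖ ^ Sn k' (ns m) := by
      rw [← pow_add]; exact pow_le_pow_right₀ hw.le hkey
    have hS'pos : (0:ℝ) < ‖w‖ ^ Sn k' (ns m) := by positivity
    rw [← mul_assoc, mul_inv_le_iff₀' hS'pos]
    calc ‖w‖ ^ Sn k a * ‖blk m k'‖
        ≤ ‖w‖ ^ Sn k a * (‖w‖ ^ D m * (1/2)^m) :=
          mul_le_mul_of_nonneg_left (le_trans (hblkB m k') (hB2 m)) (by positivity)
      _ = (‖w‖ ^ Sn k a * ‖w‖ ^ D m) * (1/2)^m := by ring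
      _ ≤ ‖w‖ ^ Sn k' (ns m) * (1/2)^m :=
          mul_le_mul_of_nonneg_right h1 (by positivity)
  -- bound on x inside a block
  have hxB : ∀ m k', 1 ≤ m → k' < L m → ‖x (ns m + k')‖ ≤ (1/2:ℝ)^m := by
    intro m k' hm hk'
    rw [hxdef, hcx_block w blk hgap hmono hk', norm_mul, norm_inv, norm_pow]
    have hDm : D m ≤ Sn k' (ns m) := by
      obtain ⟨t, rfl⟩ : ∃ t, m = t+1 := ⟨m-1, by omega⟩
      have h1 := D_le_nseq L D t
      have h2 := le_Sn_zero (nseq L D (t+1))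
      have h3 : Sn k' (nseq L D (t+1)) = nseq L D (t+1) * k' + Sn 0 (nseq L D (t+1)) :=
        Sn_eq _ _
      have h4 : ns (t+1) = nseq L D (t+1) := rfl
      rw [h4]
      omega
    have h1 : ‖w‖ ^ D m ≤ ‖w‖ ^ Sn k' (ns m) := pow_le_pow_right₀ hw.le hDm
    have hS'pos : (0:ℝ) < ‖w‖ ^ Sn k' (ns m) := by positivity
    rw [mul_inv_le_iff₀' hS'pos]
    calc ‖blk m k'‖ ≤ ‖w‖ ^ D m * (1/2)^m := le_trans (hblkB m k') (hB2 m)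
      _ ≤ ‖w‖ ^ Sn k' (ns m) * (1/2)^m := mul_le_mul_of_nonneg_right h1 (by positivity)
  -- membership of blocks: the containing block index is large for large j
  have hbig : ∀ M j m, ns M ≤ j → (ns m ≤ j ∧ j < ns m + L m) → M ≤ m := by
    intro M j m hMj hPj
    by_contra hc
    push_neg at hc
    have h1 : ns m + L m ≤ ns (m+1) := hgap m
    have h2 : ns (m+1) ≤ ns M := hmono hc
    omega
  -- x ∈ c₀
  have hxc0 : x ∈ c0Set 𝕜 := by
    rw [mem_c0_iff]
    intro δ hδ
    obtain ⟨M₁, hM₁⟩ := exists_pow_lt_of_lt_one hδ (show (1:ℝ)/2 < 1 by norm_num)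
    refine ⟨ns (M₁+1), fun j hj => ?_⟩
    rcases hcx_cases w blk ns L j with h0 | ⟨m, hPj, hval⟩
    · rw [hxdef, h0, norm_zero]; exact hδ
    · have hm : M₁+1 ≤ m := hbig (M₁+1) j m hj hPj
      have hj' : j = ns m + (j - ns m) := by omega
      have hb := hxB m (j - ns m) (by omega) (by omega)
      rw [← hj'] at hb
      rw [hxdef]
      refine lt_of_le_of_lt hb (lt_of_le_of_lt ?_ hM₁)
      exact pow_le_pow_of_le_one hhalf0 hhalf1 (by omega)
  -- powers of A applied to x stay in c₀
  have hxdom : ∀ a : ℕ, 1 ≤ a → powAct w a x ∈ c0Set 𝕜 := by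
    intro a ha
    rw [mem_c0_iff]
    intro δ hδ
    obtain ⟨M₁, hM₁⟩ := exists_pow_lt_of_lt_one hδ (show (1:ℝ)/2 < 1 by norm_num)
    set M := max (M₁+1) (a+1) with hMdef
    refine ⟨ns M, fun k hk => ?_⟩
    rw [powAct_eq, norm_mul, norm_pow]
    rcases hcx_cases w blk ns L (k + a) with h0 | ⟨m, hPj, hval⟩
    · rw [hxdef, h0, norm_zero, mul_zero]; exact hδ
    · have hm : M ≤ m := hbig M (k+a) m (le_trans hk (Nat.le_add_right _ _)) hPj
      have hm1 : 1 ≤ m := le_trans (le_trans (Nat.le_add_left 1 M₁) (le_max_left _ _)) hm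
      have ham : a ≤ ns (m-1) := by
        have h1 : a + 1 ≤ M := le_max_right _ _
        have h2 := lt_nseq L D (m-1)
        have h3 : ns (m-1) = nseq L D (m-1) := rfl
        omega
      have heq : k + a = ns m + (k + a - ns m) := by omega
      have hb := keyB a m k (k + a - ns m) hm1 ham heq (by omega)
      refine lt_of_le_of_lt hb (lt_of_le_of_lt ?_ hM₁)
      refine pow_le_pow_of_le_one hhalf0 hhalf1 ?_
      calc M₁ ≤ M₁ + 1 := Nat.le_add_right _ _
        _ ≤ M := le_max_left _ _
        _ ≤ m := hm
  -- exact values of the orbit on an initial segment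
  have horb1 : ∀ m k, k < L m → powAct w (ns m) x k = blk m k := by
    intro m k hk
    rw [powAct_eq, Nat.add_comm k (ns m), hxdef, hcx_block w blk hgap hmono hk]
    have hp : (w : 𝕜) ^ Sn k (ns m) ≠ 0 := pow_ne_zero _ hw0
    field_simp
  -- tail bound of the orbit
  have horb2 : ∀ m k, 1 ≤ m → L m ≤ k → ‖powAct w (ns m) x k‖ ≤ (1/2:ℝ)^(m+1) := by
    intro m k hm hk
    rw [powAct_eq, norm_mul, norm_pow]
    rcases hcx_cases w blk ns L (k + ns m) with h0 | ⟨m', hPj, hval⟩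
    · rw [hxdef, h0, norm_zero, mul_zero]; positivity
    · have hm' : m + 1 ≤ m' := by
        by_contra hc
        push_neg at hc
        rcases Nat.lt_succ_iff_lt_or_eq.mp hc with hlt | heqm
        · have h1 : ns m' + L m' ≤ ns (m'+1) := hgap m'
          have h2 : ns (m'+1) ≤ ns m := hmono hlt
          omega
        · subst heqm
          omega
      have ham : ns m ≤ ns (m'-1) := hmono (by omega)
      have heq : k + ns m = ns m' + (k + ns m - ns m') := by omega
      have hb := keyB (ns m) m' k (k + ns m - ns m') (by omega) ham heq (by omega)
      exact le_trans hb (pow_le_pow_of_le_one hhalf0 hhalf1 hm')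
  -- assemble
  refine ⟨x, fun n hn => ⟨hxc0, hxdom n hn⟩, ?_⟩
  intro y hy ε hε
  obtain ⟨M₀, hM₀⟩ := mem_c0_iff.mp hy (ε/4) (by positivity)
  have hsel : ∀ k, ∃ i, dist (y k) (d i) < ε/4 :=
    fun k => hd.exists_dist_lt (y k) (by positivity)
  choose idx hidx using hsel
  set l : List ℕ := (List.range M₀).map idx with hldef
  obtain ⟨A₀, hA₀⟩ := exists_pow_lt_of_lt_one (show (0:ℝ) < ε/4 by positivity)
    (show (1:ℝ)/2 < 1 by norm_num)
  set m := Nat.pair (A₀ + 1) (Encodable.encode l) with hmdef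
  have hmA : A₀ + 1 ≤ m := Nat.left_le_pair _ _
  have hm1 : 1 ≤ m := le_trans (Nat.le_add_left 1 A₀) hmA
  have hlm : listEnc m = l := by
    rw [hlistEnc, hmdef]
    simp [Nat.unpair_pair, Denumerable.ofNat_encode]
  have hLm : L m = M₀ := by
    rw [hLdef]
    simp only [hlm, hldef, List.length_map, List.length_range]
  have hpow : (1/2:ℝ)^(m+1) ≤ ε/4 :=
    le_trans (pow_le_pow_of_le_one hhalf0 hhalf1 (by omega)) hA₀.le
  refine ⟨ns m, supNorm_lt_of hε fun k => ?_⟩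
  rw [Pi.sub_apply]
  by_cases hk : k < M₀
  · rw [horb1 m k (by omega)]
    have hbv : blk m k = d (idx k) := by
      simp only [hblkdef, hlm, hldef, List.map_map]
      have hk' : k < ((List.range M₀).map (d ∘ idx)).length := by
        simp [List.length_map, List.length_range, hk]
      rw [List.getD_eq_getElem _ _ hk', List.getElem_map, List.getElem_range]
      rfl
    rw [hbv]
    have h1 : ‖d (idx k) - y k‖ = ‖y k - d (idx k)‖ := norm_sub_rev _ _
    rw [h1]
    have h2 : ‖y k - d (idx k)‖ < ε/4 := by
      rw [← dist_eq_norm]; exact hidx k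
    linarith
  · push_neg at hk
    have h1 : ‖powAct w (ns m) x k‖ ≤ (1/2:ℝ)^(m+1) := horb2 m k hm1 (by omega)
    have h2 : ‖y k‖ ≤ ε/4 := (hM₀ k hk).le
    calc ‖powAct w (ns m) x k - y k‖ ≤ ‖powAct w (ns m) x k‖ + ‖y k‖ := norm_sub_le _ _
      _ ≤ (1/2:ℝ)^(m+1) + ε/4 := add_le_add h1 h2
      _ ≤ ε/4 + ε/4 := by linarith
      _ = ε/2 := by ring
end

section
/- For every w ∈ 𝔽 with |w| > 1 and every n ≥ 1, the n-th power A_wⁿ of the unbounded weighted backward shift A_w in c₀ is chaotic: there exists x whose orbit under A_wⁿ is dense in c₀, and the set of periodic points of A_wⁿ is dense in c₀. -/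
open Filter Topology

/-- The weight product `∏_{j=k+1}^{k+p} w^j` appearing in `powAct`. -/
noncomputable def Pprod {𝕜 : Type*} [RCLike 𝕜] (w : 𝕜) (k p : ℕ) : 𝕜 :=
  ∏ j ∈ Finset.Ico (k + 1) (k + p + 1), w ^ j

lemma powAct_eq_Pprod {𝕜 : Type*} [RCLike 𝕜] (w : 𝕜) (p : ℕ) (x : ℕ → 𝕜) (k : ℕ) :
    powAct w p x k = Pprod w k p * x (k + p) := rfl

lemma Pprod_zero {𝕜 : Type*} [RCLike 𝕜] (w : 𝕜) (k : ℕ) : Pprod w k 0 = 1 := by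
  simp [Pprod]

lemma Pprod_split {𝕜 : Type*} [RCLike 𝕜] (w : 𝕜) (a b c : ℕ) :
    Pprod w a (b + c) = Pprod w a b * Pprod w (a + b) c := by
  unfold Pprod
  rw [show a + (b + c) + 1 = a + b + c + 1 by ring,
    ← Finset.prod_Ico_consecutive (fun j => w ^ j) (by omega : a + 1 ≤ a + b + 1)
      (by omega : a + b + 1 ≤ a + b + c + 1)]

lemma Pprod_ne_zero {𝕜 : Type*} [RCLike 𝕜] {w : 𝕜} (hw : 1 < ‖w‖) (k p : ℕ) :
    Pprod w k p ≠ 0 := by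
  have hwne : w ≠ 0 := by
    intro h; rw [h, norm_zero] at hw; linarith
  exact Finset.prod_ne_zero_iff.mpr (fun j _ => pow_ne_zero _ hwne)

lemma Pprod_norm_ge {𝕜 : Type*} [RCLike 𝕜] {w : 𝕜} (hw : 1 < ‖w‖) (k p : ℕ) :
    ‖w‖ ^ p ≤ ‖Pprod w k p‖ := by
  have h1 : (1:ℝ) ≤ ‖w‖ := hw.le
  rw [Pprod, norm_prod]
  calc ‖w‖ ^ p = ∏ _j ∈ Finset.Ico (k+1) (k+p+1), ‖w‖ := by
        rw [Finset.prod_const, Nat.card_Ico]; congr 1; omega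
  _ ≤ ∏ j ∈ Finset.Ico (k+1) (k+p+1), ‖w ^ j‖ := by
        refine Finset.prod_le_prod (fun _ _ => norm_nonneg _) (fun j hj => ?_)
        rw [norm_pow]
        calc ‖w‖ = ‖w‖ ^ 1 := (pow_one _).symm
        _ ≤ ‖w‖ ^ j := pow_le_pow_right₀ h1 (by have := (Finset.mem_Ico.mp hj).1; omega)

set_option maxHeartbeats 2000000 in
/-- For every `w` with `‖w‖ > 1` and every `n ≥ 1`, the `n`-th power `A_wⁿ`
of the unbounded weighted backward shift `A_w` in `c₀` is chaotic: there exists `x` whose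
orbit under `A_wⁿ` (i.e. `{A_w^{n m} x : m ≥ 0}`) is dense in `c₀` (w.r.t. the sup-norm),
and the set of periodic points of `A_wⁿ` is dense in `c₀`. -/
theorem unbounded_backward_shift_powers_chaotic
    (𝕜 : Type*) [RCLike 𝕜] (w : 𝕜) (hw : 1 < ‖w‖) (n : ℕ) (hn : 1 ≤ n) :
    (∃ x : ℕ → 𝕜, (∀ m : ℕ, 1 ≤ m → x ∈ powDom w (n * m)) ∧
      ∀ y ∈ c0Set 𝕜, ∀ ε > (0 : ℝ), ∃ m : ℕ, supNorm (powAct w (n * m) x - y) < ε) ∧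
    (∀ y ∈ c0Set 𝕜, ∀ ε > (0 : ℝ),
      ∃ x : ℕ → 𝕜, (∃ N : ℕ, 1 ≤ N ∧ x ∈ powDom w (n * N) ∧ powAct w (n * N) x = x) ∧
        supNorm (x - y) < ε) := by
  have h0w : (0:ℝ) < ‖w‖ := lt_trans one_pos hw
  have h1w : (1:ℝ) ≤ ‖w‖ := hw.le
  have hexp : ∀ C : ℝ, ∃ t : ℕ, C ≤ ‖w‖ ^ t := fun C =>
    (pow_unbounded_of_one_lt C hw).imp (fun _ ht => ht.le)
  constructor
  · -- hypercyclic vector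
    obtain ⟨d, hd⟩ := TopologicalSpace.exists_dense_seq 𝕜
    set L : ℕ → List ℕ := fun i => Denumerable.ofNat (List ℕ) i.unpair.2 with hL
    set K : ℕ → ℕ := fun i => (L i).length with hK
    set z : ℕ → ℕ → 𝕜 := fun i k => ((L i).map d).getD k (0:𝕜) with hz
    have hz_zero : ∀ i k, K i ≤ k → z i k = 0 := by
      intro i k hk
      exact List.getD_eq_default _ _ (by simpa using hk)
    set B : ℕ → ℝ := fun i => ∑ k ∈ Finset.range (K i), ‖z i k‖ with hB
    have hB_nonneg : ∀ i, 0 ≤ B i := fun i => Finset.sum_nonneg (fun _ _ => norm_nonneg _)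
    have hzB : ∀ i k, ‖z i k‖ ≤ B i := by
      intro i k
      by_cases h : k < K i
      · exact Finset.single_le_sum (f := fun k => ‖z i k‖) (fun _ _ => norm_nonneg _)
          (Finset.mem_range.mpr h)
      · rw [hz_zero i k (le_of_not_gt h), norm_zero]; exact hB_nonneg i
    -- density of the enumeration, with recurrence
    have hdense : ∀ y ∈ c0Set 𝕜, ∀ ε > (0:ℝ), ∀ i₀ : ℕ,
        ∃ i, i₀ ≤ i ∧ ∀ k, ‖z i k - y k‖ ≤ ε := by
      intro y hy ε hε i₀
      obtain ⟨K₀, hK₀⟩ := eventually_atTop.mp ((NormedAddCommGroup.tendsto_nhds_zero.mp hy) ε hε)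
      have hc : ∀ k : ℕ, ∃ c : ℕ, ‖d c - y k‖ ≤ ε := by
        intro k
        obtain ⟨c, hc⟩ := hd.exists_dist_lt (y k) hε
        exact ⟨c, by rw [← dist_eq_norm, dist_comm]; exact hc.le⟩
      choose c hcs using hc
      set l : List ℕ := List.ofFn (fun j : Fin K₀ => c j) with hl
      refine ⟨Nat.pair i₀ (Encodable.encode l), Nat.left_le_pair _ _, ?_⟩
      intro k
      have hLl : L (Nat.pair i₀ (Encodable.encode l)) = l := by
        rw [hL]; dsimp only; rw [Nat.unpair_pair]; exact Denumerable.ofNat_encode l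
      rw [hz]; dsimp only
      rw [hLl, hl, List.map_ofFn]
      by_cases h : k < K₀
      · rw [List.getD_eq_getElem _ _ (by simpa using h)]
        simpa using hcs k
      · rw [List.getD_eq_default _ _ (by simpa using not_lt.mp h), zero_sub, norm_neg]
        exact (hK₀ k (not_lt.mp h)).le
    -- recursive construction of the block positions
    have hstep : ∀ i prev : ℕ, ∃ next : ℕ,
        n * prev + K i + K (i+1) < n * next ∧
        (2:ℝ)^(i+1) * (B (i+1) + 1) ≤ ‖w‖ ^ (n * next - n * prev) := by
      intro i prev
      obtain ⟨t, ht⟩ := hexp ((2:ℝ)^(i+1) * (B (i+1) + 1))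
      refine ⟨prev + t + K i + K (i+1) + 1, ?_, ?_⟩
      · have h1 : t + K i + K (i+1) + 1 ≤ n * (t + K i + K (i+1) + 1) :=
          Nat.le_mul_of_pos_left _ (by omega)
        have h2 : n * (prev + t + K i + K (i+1) + 1)
            = n * prev + n * (t + K i + K (i+1) + 1) := by ring
        omega
      · refine ht.trans (pow_le_pow_right₀ h1w ?_)
        have h1 : t + K i + K (i+1) + 1 ≤ n * (t + K i + K (i+1) + 1) :=
          Nat.le_mul_of_pos_left _ (by omega)
        have h2 : n * (prev + t + K i + K (i+1) + 1)
            = n * prev + n * (t + K i + K (i+1) + 1) := by ring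
        omega
    choose step hstep1 hstep2 using hstep
    obtain ⟨m0, hm0⟩ : ∃ m0 : ℕ, (B 0 + 1 : ℝ) ≤ ‖w‖ ^ (n * m0) := by
      obtain ⟨t, ht⟩ := hexp (B 0 + 1)
      exact ⟨t, ht.trans (pow_le_pow_right₀ h1w (Nat.le_mul_of_pos_left t (by omega)))⟩
    obtain ⟨msq, hmsq0, hmsqS⟩ : ∃ msq : ℕ → ℕ, (B 0 + 1 : ℝ) ≤ ‖w‖ ^ (n * msq 0) ∧
        ∀ i, (n * msq i + K i + K (i+1) < n * msq (i+1)) ∧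
        (2:ℝ)^(i+1) * (B (i+1) + 1) ≤ ‖w‖ ^ (n * msq (i+1) - n * msq i) := by
      refine ⟨fun i => Nat.rec m0 (fun i prev => step i prev) i, hm0, fun i => ⟨?_, ?_⟩⟩
      · exact hstep1 i _
      · exact hstep2 i _
    set s : ℕ → ℕ := fun i => n * msq i with hs_def
    have hs_succ : ∀ i, s i + K i + K (i+1) < s (i+1) := fun i => (hmsqS i).1
    have hs_pow : ∀ i, (2:ℝ)^(i+1) * (B (i+1) + 1) ≤ ‖w‖ ^ (s (i+1) - s i) := fun i => (hmsqS i).2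
    have hs0 : (B 0 + 1 : ℝ) ≤ ‖w‖ ^ (s 0) := hmsq0
    have hblock_lt : ∀ i, s i + K i < s (i+1) := fun i => by have := hs_succ i; omega
    have hs_mono : StrictMono s := strictMono_nat_of_lt_succ (fun i => by
      have := hblock_lt i; omega)
    have hs_id : ∀ i, i ≤ s i := by
      intro i
      induction i with
      | zero => exact Nat.zero_le _
      | succ i ih => have := hblock_lt i; omega
    have hW : ∀ i, (2:ℝ)^i * (B i + 1) ≤ ‖w‖ ^ (s i) := by
      intro i
      cases i with
      | zero => simpa using hs0
      | succ i => exact (hs_pow i).trans (pow_le_pow_right₀ h1w (Nat.sub_le _ _))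
    have hdisj : ∀ i j q, s i ≤ q → q - s i < K i → s j ≤ q → q - s j < K j → i = j := by
      have key : ∀ i j q, i < j → s i ≤ q → q - s i < K i → s j ≤ q → False := by
        intro i j q hij h1 h2 h3
        have hA := hblock_lt i
        have hB2 : s (i+1) ≤ s j := hs_mono.monotone hij
        omega
      intro i j q h1 h2 h3 h4
      rcases lt_trichotomy i j with h | h | h
      · exact absurd (key i j q h h1 h2 h3) (fun hc => hc)
      · exact h
      · exact absurd (key j i q h h3 h4 h1) (fun hc => hc)
    -- the hypercyclic vector
    set x : ℕ → 𝕜 := fun q => ∑ i ∈ Finset.range (q+1),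
        if s i ≤ q ∧ q - s i < K i then z i (q - s i) * (Pprod w (q - s i) (s i))⁻¹ else 0
      with hx
    have hxA : ∀ i k', k' < K i → x (k' + s i) = z i k' * (Pprod w k' (s i))⁻¹ := by
      intro i k' hk'
      have hkk : (k' + s i) - s i = k' := by omega
      rw [hx]; dsimp only
      rw [Finset.sum_eq_single_of_mem i
        (Finset.mem_range.mpr (by have := hs_id i; omega))]
      · rw [if_pos ⟨Nat.le_add_left _ _, by rw [hkk]; exact hk'⟩, hkk]
      · intro j _ hji
        refine if_neg (fun hc => hji ?_)
        exact hdisj j i (k' + s i) hc.1 hc.2 (Nat.le_add_left _ _) (by rw [hkk]; exact hk')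
    have hxB : ∀ q, (∀ i, ¬(s i ≤ q ∧ q - s i < K i)) → x q = 0 := by
      intro q h
      rw [hx]; exact Finset.sum_eq_zero (fun i _ => if_neg (h i))
    -- key bound
    have hbound : ∀ (p k j : ℕ), s j ≤ k + p → (k + p) - s j < K j → p ≤ s j →
        ‖Pprod w k p * x (k + p)‖ ≤ B j / ‖w‖ ^ (s j - p) := by
      intro p k j h1 h2 h3
      set k' := (k + p) - s j with hk'
      have hq : k + p = k' + s j := by omega
      have hk'k : k' ≤ k := by omega
      have hx' : x (k + p) = z j k' * (Pprod w k' (s j))⁻¹ := by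
        rw [hq]; exact hxA j k' h2
      have hsplit : Pprod w k' (s j) = Pprod w k' (k - k') * Pprod w k p := by
        rw [show s j = (k - k') + p by omega, Pprod_split, Nat.add_sub_cancel' hk'k]
      have hPne : Pprod w k p ≠ 0 := Pprod_ne_zero hw k p
      have hPne2 : Pprod w k' (k - k') ≠ 0 := Pprod_ne_zero hw k' (k - k')
      have heq : Pprod w k p * x (k + p) = z j k' * (Pprod w k' (k - k'))⁻¹ := by
        rw [hx', hsplit]
        field_simp
      rw [heq, norm_mul, norm_inv, ← div_eq_mul_inv]
      have h6 : ‖w‖ ^ (k - k') ≤ ‖Pprod w k' (k - k')‖ := Pprod_norm_ge hw k' (k - k')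
      have h8 : k - k' = s j - p := by omega
      rw [← h8]
      exact div_le_div₀ (hB_nonneg j) (hzB j k') (pow_pos h0w _) h6
    have hfinal : ∀ p k j, s j ≤ k + p → (k + p) - s j < K j → p ≤ s j →
        ‖Pprod w k p * x (k + p)‖ ≤ ‖w‖ ^ p / 2 ^ j := by
      intro p k j h1 h2 h3
      refine (hbound p k j h1 h2 h3).trans ?_
      have hWj := hW j
      have h2j : (0:ℝ) < 2 ^ j := by positivity
      rw [div_le_div_iff₀ (pow_pos h0w _) h2j]
      calc B j * 2 ^ j ≤ (2:ℝ)^j * (B j + 1) := by nlinarith [hB_nonneg j, h2j.le]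
      _ ≤ ‖w‖ ^ (s j) := hWj
      _ = ‖w‖ ^ p * ‖w‖ ^ (s j - p) := by rw [← pow_add]; congr 1; omega
    -- tendsto lemma (for all powers at once)
    have hLD : ∀ p : ℕ, Tendsto (fun k => Pprod w k p * x (k + p)) atTop (nhds (0:𝕜)) := by
      intro p
      rw [NormedAddCommGroup.tendsto_nhds_zero]
      intro δ hδ
      obtain ⟨i₁, hi₁⟩ : ∃ i₁ : ℕ, ‖w‖ ^ p / δ < 2 ^ i₁ := pow_unbounded_of_one_lt _ one_lt_two
      set i₀ := max p i₁ with hi₀def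
      rw [eventually_atTop]
      refine ⟨s i₀, fun k hk => ?_⟩
      by_cases hblk : ∃ j, s j ≤ k + p ∧ (k + p) - s j < K j
      · obtain ⟨j, hj1, hj2⟩ := hblk
        have hji₀ : i₀ ≤ j := by
          by_contra hc
          push_neg at hc
          have hA := hblock_lt j
          have hB2 : s (j+1) ≤ s i₀ := hs_mono.monotone hc
          omega
        have hpj : p ≤ s j := by
          have := hs_id i₀
          have := hs_mono.monotone hji₀
          have : p ≤ i₀ := le_max_left _ _
          omega
        refine lt_of_le_of_lt (hfinal p k j hj1 hj2 hpj) ?_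
        have hwp0 : (0:ℝ) < ‖w‖ ^ p := pow_pos h0w _
        have h2i : (2:ℝ)^i₁ ≤ 2^j := pow_le_pow_right₀ one_le_two
          (le_trans (le_max_right p i₁) hji₀)
        have hlt : ‖w‖ ^ p / 2 ^ i₁ < δ := by
          rw [div_lt_iff₀ (by positivity)]
          rw [div_lt_iff₀ hδ] at hi₁
          nlinarith
        refine lt_of_le_of_lt ?_ hlt
        gcongr
      · push_neg at hblk
        rw [hxB (k + p) (fun i => by intro hc; exact absurd hc.2 (not_lt.mpr (hblk i hc.1)))]
        simpa using hδ
    have hxc0 : x ∈ c0Set 𝕜 := by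
      show Tendsto x atTop (nhds 0)
      have h := hLD 0
      refine h.congr (fun k => ?_)
      rw [Pprod_zero, one_mul, Nat.add_zero]
    have hdom : ∀ p, powAct w p x ∈ c0Set 𝕜 := fun p => hLD p
    refine ⟨x, fun m _ => ⟨hxc0, hdom (n * m)⟩, ?_⟩
    -- density of the orbit
    intro y hy ε hε
    obtain ⟨i₁, hi₁⟩ : ∃ i₁ : ℕ, (4:ℝ) / ε < 2 ^ i₁ := pow_unbounded_of_one_lt _ one_lt_two
    obtain ⟨i, hi₀, hzi⟩ := hdense y hy (ε/4) (by positivity) i₁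
    refine ⟨msq i, ?_⟩
    show supNorm (powAct w (s i) x - y) < ε
    have hpt : ∀ k, ‖(powAct w (s i) x - y) k‖ ≤ ε/2 := by
      intro k
      have hsub : (powAct w (s i) x - y) k
          = (Pprod w k (s i) * x (k + s i) - z i k) + (z i k - y k) := by
        show powAct w (s i) x k - y k = _
        rw [powAct_eq_Pprod]; ring
      rw [hsub]
      refine (norm_add_le _ _).trans ?_
      have h2 : ‖z i k - y k‖ ≤ ε/4 := hzi k
      have h1 : ‖Pprod w k (s i) * x (k + s i) - z i k‖ ≤ ε/4 := by
        by_cases hk : k < K i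
        · rw [hxA i k hk]
          have hPne : Pprod w k (s i) ≠ 0 := Pprod_ne_zero hw k (s i)
          have : Pprod w k (s i) * (z i k * (Pprod w k (s i))⁻¹) = z i k := by
            field_simp
          rw [this, sub_self, norm_zero]; positivity
        · rw [hz_zero i k (le_of_not_gt hk), sub_zero]
          by_cases hblk : ∃ j, s j ≤ k + s i ∧ (k + s i) - s j < K j
          · obtain ⟨j, hj1, hj2⟩ := hblk
            have hij : i < j := by
              rcases lt_trichotomy i j with h | h | h
              · exact h
              · exfalso; subst h
                have : (k + s i) - s i = k := by omega
                omega
              · exfalso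
                have hA := hblock_lt j
                have hB2 : s (j+1) ≤ s i := hs_mono.monotone h
                omega
            obtain ⟨j', rfl⟩ : ∃ j', j = j' + 1 := ⟨j - 1, by omega⟩
            have hpj : s i ≤ s (j'+1) := hs_mono.monotone hij.le
            refine (hbound (s i) k (j'+1) hj1 hj2 hpj).trans ?_
            have hup : (2:ℝ)^(j'+1) * (B (j'+1) + 1) ≤ ‖w‖ ^ (s (j'+1) - s i) := by
              refine (hs_pow j').trans (pow_le_pow_right₀ h1w ?_)
              have : s i ≤ s j' := hs_mono.monotone (by omega : i ≤ j')
              omega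
            have h2j : (0:ℝ) < 2 ^ (j'+1) := by positivity
            have hpos : (0:ℝ) < ‖w‖ ^ (s (j'+1) - s i) := pow_pos h0w _
            have hstep1' : B (j'+1) / ‖w‖ ^ (s (j'+1) - s i) ≤ 1 / 2 ^ (j'+1) := by
              rw [div_le_div_iff₀ hpos h2j]
              nlinarith [hB_nonneg (j'+1)]
            refine hstep1'.trans ?_
            have h2big : (4:ℝ) / ε < 2 ^ (j'+1) :=
              lt_of_lt_of_le hi₁ (pow_le_pow_right₀ one_le_two (by omega))
            rw [div_lt_iff₀ hε] at h2big
            rw [div_le_div_iff₀ h2j (by norm_num : (0:ℝ) < 4)]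
            nlinarith
          · push_neg at hblk
            rw [hxB (k + s i) (fun j => by
              intro hc; exact absurd hc.2 (not_lt.mpr (hblk j hc.1)))]
            rw [mul_zero, norm_zero]; positivity
      linarith
    have hsup : supNorm (powAct w (s i) x - y) ≤ ε/2 := by
      unfold supNorm; exact ciSup_le hpt
    linarith
  · -- periodic points are dense
    intro y hy ε hε
    obtain ⟨K₀, hK₀⟩ := eventually_atTop.mp
      ((NormedAddCommGroup.tendsto_nhds_zero.mp hy) (ε/4) (by positivity))
    set Bz : ℝ := ∑ k ∈ Finset.range K₀, ‖y k‖ with hBz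
    have hBz0 : 0 ≤ Bz := Finset.sum_nonneg fun _ _ => norm_nonneg _
    obtain ⟨t, ht⟩ := hexp (4 * (Bz + 1) / ε)
    set N := max 1 (max K₀ t) with hN
    set p := n * N with hp
    have hp1 : 1 ≤ N := le_max_left _ _
    have hNp : N ≤ p := Nat.le_mul_of_pos_left N (by omega)
    have hpK : K₀ ≤ p := le_trans (le_trans (le_max_left _ _) (le_max_right 1 _)) hNp
    have hpt' : t ≤ p := le_trans (le_trans (le_max_right _ _) (le_max_right 1 _)) hNp
    have hppos : 0 < p := by
      have : 0 < N := hp1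
      exact Nat.mul_pos (by omega) this
    have hwp : 4 * (Bz + 1) / ε ≤ ‖w‖ ^ p := ht.trans (pow_le_pow_right₀ h1w hpt')
    have hBzp : Bz / ‖w‖ ^ p ≤ ε/4 := by
      rw [div_le_iff₀ hε] at hwp
      rw [div_le_div_iff₀ (pow_pos h0w p) (by norm_num : (0:ℝ) < 4)]
      nlinarith [pow_pos h0w p]
    set zz : ℕ → 𝕜 := fun k => if k < K₀ then y k else 0 with hzz
    have hzzB : ∀ k, ‖zz k‖ ≤ Bz := by
      intro k
      rw [hzz]; dsimp only
      by_cases h : k < K₀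
      · rw [if_pos h]
        exact Finset.single_le_sum (f := fun k => ‖y k‖) (fun _ _ => norm_nonneg _)
          (Finset.mem_range.mpr h)
      · rw [if_neg h, norm_zero]; exact hBz0
    set xp : ℕ → 𝕜 := fun q => zz (q % p) * (Pprod w (q % p) (q - q % p))⁻¹ with hxp
    have hper : powAct w p xp = xp := by
      funext k
      rw [powAct_eq_Pprod]
      have hmod : (k + p) % p = k % p := Nat.add_mod_right k p
      have hle : k % p ≤ k := Nat.mod_le k p
      have hsub : k + p - k % p = (k - k % p) + p := by omega
      rw [hxp]; dsimp only
      rw [hmod, hsub, Pprod_split, Nat.add_sub_cancel' hle]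
      have h1 := Pprod_ne_zero (w := w) hw (k % p) (k - k % p)
      have h2 := Pprod_ne_zero (w := w) hw k p
      field_simp
    have hxpnorm : ∀ q, ‖xp q‖ ≤ Bz / ‖w‖ ^ (q - q % p) := by
      intro q
      rw [hxp]; dsimp only
      rw [norm_mul, norm_inv, ← div_eq_mul_inv]
      exact div_le_div₀ hBz0 (hzzB _) (pow_pos h0w _) (Pprod_norm_ge hw _ _)
    have hxpc0 : xp ∈ c0Set 𝕜 := by
      show Tendsto xp atTop (nhds 0)
      rw [NormedAddCommGroup.tendsto_nhds_zero]
      intro δ hδ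
      obtain ⟨t', ht'⟩ := hexp (Bz / δ + 1)
      rw [eventually_atTop]
      refine ⟨t' + p, fun q hq => ?_⟩
      have hml : q % p < p := Nat.mod_lt q hppos
      have he : t' ≤ q - q % p := by omega
      have hwt' : (0:ℝ) < ‖w‖ ^ t' := pow_pos h0w _
      have hmono : Bz / ‖w‖ ^ (q - q % p) ≤ Bz / ‖w‖ ^ t' := by
        gcongr
      have hlast : Bz / ‖w‖ ^ t' < δ := by
        rw [div_lt_iff₀ hwt']
        have hh1 : δ * (Bz / δ + 1) ≤ δ * ‖w‖ ^ t' := mul_le_mul_of_nonneg_left ht' hδ.le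
        have hh2 : δ * (Bz / δ + 1) = Bz + δ := by field_simp
        linarith
      exact lt_of_le_of_lt ((hxpnorm q).trans hmono) hlast
    refine ⟨xp, ⟨N, hp1, ⟨hxpc0, by rw [show n * N = p from rfl, hper]; exact hxpc0⟩,
      by rw [show n * N = p from rfl]; exact hper⟩, ?_⟩
    have hptw : ∀ q, ‖(xp - y) q‖ ≤ ε/2 := by
      intro q
      show ‖xp q - y q‖ ≤ ε/2
      by_cases h1 : q < p
      · have hq : q % p = q := Nat.mod_eq_of_lt h1
        have hxq : xp q = zz q := by
          rw [hxp]; dsimp only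
          rw [hq, Nat.sub_self, Pprod_zero, inv_one, mul_one]
        rw [hxq, hzz]; dsimp only
        by_cases h2 : q < K₀
        · rw [if_pos h2, sub_self, norm_zero]; positivity
        · rw [if_neg h2, zero_sub, norm_neg]
          have := hK₀ q (by omega)
          linarith
      · push_neg at h1
        have hyq : ‖y q‖ ≤ ε/4 := (hK₀ q (by omega)).le
        have hmod2 : q % p ≤ q - p := by
          have hA := Nat.mod_eq_sub_mod h1
          have hB2 := Nat.mod_le (q - p) p
          omega
        have hxq : ‖xp q‖ ≤ ε/4 := by
          refine (hxpnorm q).trans (le_trans ?_ hBzp)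
          gcongr
          omega
        calc ‖xp q - y q‖ ≤ ‖xp q‖ + ‖y q‖ := norm_sub_le _ _
        _ ≤ ε/2 := by linarith
    have hsup : supNorm (xp - y) ≤ ε/2 := by
      unfold supNorm; exact ciSup_le hptw
    linarith
end

section
/- For every w ∈ 𝔽 with |w| > 1 and every λ ∈ 𝔽, λ is an eigenvalue of the unbounded weighted backward shift A_w in c₀ of geometric multiplicity 1: the solution set of A_w x = λx, x ∈ D(A_w), is the one-dimensional subspace spanned by the sequence y = (y_k)_{k≥1} with y_k = λ^{k−1}/w^{k(k−1)/2} (with 0⁰ := 1), which lies in D(A_w) and is nonzero. In particular, when 𝔽 = ℂ, the point spectrum of A_w is all of ℂ. -/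
open Filter Topology

/-- The action of the unbounded weighted backward shift `A_w`:
`(A_w x)_k = w^k x_{k+1}` for the paper's `1`-based index `k ≥ 1`, i.e.
`(A_w x) k = w^(k+1) * x (k+1)` in `0`-based indexing. -/
def shiftAct {𝕜 : Type*} [RCLike 𝕜] (w : 𝕜) (x : ℕ → 𝕜) : ℕ → 𝕜 :=
  fun k => w ^ (k + 1) * x (k + 1)

/-- The maximal domain `D(A_w) = {x ∈ c₀ : A_w x ∈ c₀}`. -/
def shiftDom {𝕜 : Type*} [RCLike 𝕜] (w : 𝕜) : Set (ℕ → 𝕜) :=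
  {x | x ∈ c0Set 𝕜 ∧ shiftAct w x ∈ c0Set 𝕜}

/-- For every `w` with `‖w‖ > 1` and every `λ`, `λ` is an eigenvalue of the
unbounded weighted backward shift `A_w` in `c₀` of geometric multiplicity `1`: the solution
set of `A_w x = λ x`, `x ∈ D(A_w)`, is the one-dimensional subspace spanned by the sequence
`y` with `y_k = λ^{k-1} / w^{k(k-1)/2}` (paper's `1`-based `k ≥ 1`, i.e.
`y k = λ^k / w^{(k+1)k/2}` in `0`-based indexing; `0⁰ = 1`), which lies in `D(A_w)` and is
nonzero. In particular, for `𝕜 = ℂ` the point spectrum of `A_w` is all of `ℂ`. -/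
theorem unbounded_backward_shift_eigenvalues
    (𝕜 : Type*) [RCLike 𝕜] (w : 𝕜) (hw : 1 < ‖w‖) (lam : 𝕜) :
    (fun k : ℕ => lam ^ k / w ^ (k * (k + 1) / 2)) ∈ shiftDom w ∧
    (fun k : ℕ => lam ^ k / w ^ (k * (k + 1) / 2)) ≠ 0 ∧
    {x : ℕ → 𝕜 | x ∈ shiftDom w ∧ shiftAct w x = lam • x} =
      Set.range fun c : 𝕜 => c • fun k : ℕ => lam ^ k / w ^ (k * (k + 1) / 2) := by
  have hw0 : w ≠ 0 := by
    intro h; rw [h, norm_zero] at hw; linarith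
  set y : ℕ → 𝕜 := fun k => lam ^ k / w ^ (k * (k + 1) / 2) with hy
  have hrec : ∀ k : ℕ, y (k + 1) = (lam / w ^ (k + 1)) * y k := by
    intro k
    have hexp : (k + 1) * (k + 1 + 1) / 2 = k * (k + 1) / 2 + (k + 1) := by
      have h0 : (k + 1) * (k + 1 + 1) = k * (k + 1) + 2 * (k + 1) := by ring
      obtain ⟨m, hm⟩ := Nat.even_mul_succ_self k
      omega
    simp only [hy]
    rw [hexp, pow_add, pow_succ lam]
    have h1 : (w : 𝕜) ^ (k * (k + 1) / 2) ≠ 0 := pow_ne_zero _ hw0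
    have h2 : (w : 𝕜) ^ (k + 1) ≠ 0 := pow_ne_zero _ hw0
    field_simp
    ring
  have hAy : shiftAct w y = lam • y := by
    funext k
    have h2 : (w : 𝕜) ^ (k + 1) ≠ 0 := pow_ne_zero _ hw0
    simp only [shiftAct, hrec k, Pi.smul_apply, smul_eq_mul]
    field_simp
  have hyc0 : y ∈ c0Set 𝕜 := by
    have hsum : Summable y := by
      apply summable_of_ratio_norm_eventually_le (r := 1/2) (by norm_num)
      have htend : Tendsto (fun n : ℕ => ‖w‖ ^ (n + 1)) atTop atTop :=
        (tendsto_pow_atTop_atTop_of_one_lt hw).comp (tendsto_add_atTop_nat 1)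
      filter_upwards [htend.eventually_ge_atTop (2 * ‖lam‖)] with n hn
      have hpos : (0 : ℝ) < ‖w‖ ^ (n + 1) := pow_pos (by linarith) _
      have h1 : ‖lam / w ^ (n + 1)‖ ≤ 1 / 2 := by
        rw [norm_div, norm_pow, div_le_iff₀ hpos]
        linarith
      calc ‖y (n + 1)‖ = ‖lam / w ^ (n + 1)‖ * ‖y n‖ := by rw [hrec n, norm_mul]
        _ ≤ (1 / 2) * ‖y n‖ := mul_le_mul_of_nonneg_right h1 (norm_nonneg _)
    exact hsum.tendsto_atTop_zero
  have hAyc0 : shiftAct w y ∈ c0Set 𝕜 := by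
    rw [hAy]
    have := hyc0.const_smul lam; rw [smul_zero] at this; exact this
  have hne : y ≠ 0 := by
    intro h
    have := congrFun h 0
    simp [hy] at this
  refine ⟨⟨hyc0, hAyc0⟩, hne, ?_⟩
  ext x
  simp only [Set.mem_setOf_eq, Set.mem_range]
  constructor
  · rintro ⟨hxdom, hxeq⟩
    refine ⟨x 0, ?_⟩
    funext k
    simp only [Pi.smul_apply, smul_eq_mul]
    induction k with
    | zero => simp [hy]
    | succ n ih =>
      have h1 := congrFun hxeq n
      simp only [shiftAct, Pi.smul_apply, smul_eq_mul] at h1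
      have hwp : (w : 𝕜) ^ (n + 1) ≠ 0 := pow_ne_zero _ hw0
      have h2 : x (n + 1) = lam * x n / w ^ (n + 1) := by
        rw [eq_div_iff hwp]; linear_combination h1
      rw [h2, hrec n, ← ih]
      ring
  · rintro ⟨c, rfl⟩
    have hc0 : (c • y) ∈ c0Set 𝕜 := by
      have := hyc0.const_smul c; rw [smul_zero] at this; exact this
    have hAc : shiftAct w (c • y) = lam • (c • y) := by
      funext k
      simp only [shiftAct, Pi.smul_apply, smul_eq_mul]
      have hk := congrFun hAy k
      simp only [shiftAct, Pi.smul_apply, smul_eq_mul] at hk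
      calc w ^ (k + 1) * (c * y (k + 1)) = c * (w ^ (k + 1) * y (k + 1)) := by ring
        _ = c * (lam * y k) := by rw [hk]
        _ = lam * (c * y k) := by ring
    refine ⟨⟨hc0, ?_⟩, hAc⟩
    rw [hAc]
    have := hc0.const_smul lam; rw [smul_zero] at this; exact this
end

section
/- For every w ∈ 𝔽 with |w| > 1, the bounded linear operator B_w on c₀ defined by (B_w x)_k = w^{−(k−1)} x_{k−1} (with x₀ := 0) satisfies A_w(B_w x) = x for every eventually zero sequence x, its powers are given by (B_wⁿ x)_k = w^{−nk + n(n+1)/2} x_{k−n} (with x_j := 0 for j ≤ 0), its operator norm satisfies ‖B_wⁿ‖ = |w|^{−n(n+1)/2} for every n ≥ 1, and consequently ‖B_wⁿ‖^{1/n} → 0 as n → ∞, i.e., B_w is quasinilpotent. -/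
open Filter Topology
open scoped ZeroAtInfty

/-- For every `w` with `‖w‖ > 1`, the bounded linear operator `B_w` on `c₀`
given by `(B_w x)_k = w^{-(k-1)} x_{k-1}` (with `x_0 := 0`; here in `0`-based indexing
`(B_w x) 0 = 0` and `(B_w x) (k+1) = w⁻¹^(k+1) * x k`) satisfies `A_w (B_w x) = x` for every
eventually zero sequence `x` (where `A_w` is the unbounded backward shift,
`(A_w y) k = w^(k+1) * y (k+1)`), its powers are `(B_wⁿ x)_k = w^{-nk+n(n+1)/2} x_{k-n}`
(in `0`-based indexing `w⁻¹^{nk - n(n-1)/2} * x (k-n)` for `k ≥ n`, `0` otherwise), its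
operator norm satisfies `‖B_wⁿ‖ = |w|^{-n(n+1)/2}` for every `n ≥ 1`, and consequently
`‖B_wⁿ‖^{1/n} → 0`, i.e. `B_w` is quasinilpotent. -/
theorem right_inverse_quasinilpotent
    (𝕜 : Type*) [RCLike 𝕜] (w : 𝕜) (hw : 1 < ‖w‖)
    (B : C₀(ℕ, 𝕜) →L[𝕜] C₀(ℕ, 𝕜))
    (hB0 : ∀ x : C₀(ℕ, 𝕜), B x 0 = 0)
    (hBk : ∀ (x : C₀(ℕ, 𝕜)) (k : ℕ), B x (k + 1) = w⁻¹ ^ (k + 1) * x k) :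
    (∀ x : C₀(ℕ, 𝕜), {k : ℕ | x k ≠ 0}.Finite →
        ∀ k : ℕ, w ^ (k + 1) * (B x) (k + 1) = x k) ∧
    (∀ n : ℕ, 1 ≤ n → ∀ (x : C₀(ℕ, 𝕜)) (k : ℕ),
        (B ^ n) x k = if n ≤ k then w⁻¹ ^ (n * k - n * (n - 1) / 2) * x (k - n) else 0) ∧
    (∀ n : ℕ, 1 ≤ n → ‖B ^ n‖ = (‖w‖ ^ (n * (n + 1) / 2))⁻¹) ∧
    Tendsto (fun n : ℕ => ‖B ^ n‖ ^ ((n : ℝ)⁻¹)) atTop (nhds 0) := by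
  have hw0 : w ≠ 0 := by
    intro h
    rw [h, norm_zero] at hw
    linarith
  -- parity facts
  have heven : ∀ n : ℕ, 2 * (n * (n - 1) / 2) = n * (n - 1) := by
    intro n
    refine Nat.two_mul_div_two_of_even ?_
    rcases n with _ | m
    · simp
    · simpa [mul_comm] using Nat.even_mul_succ_self m
  have heven2 : ∀ n : ℕ, 2 * (n * (n + 1) / 2) = n * (n + 1) := fun n =>
    Nat.two_mul_div_two_of_even (Nat.even_mul_succ_self n)
  have hrel : ∀ n : ℕ, n * (n - 1) + n = n * n := by
    intro n
    rcases n with _ | m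
    · simp
    · simp only [Nat.add_sub_cancel]
      ring
  have hrel2 : ∀ n : ℕ, n * (n + 1) = n * n + n := fun n => by ring
  -- the exponent at k = n equals n(n+1)/2
  have hexp_diag : ∀ n : ℕ, n * n - n * (n - 1) / 2 = n * (n + 1) / 2 := by
    intro n
    have h1 := heven n
    have h2 := heven2 n
    have h3 := hrel n
    have h4 := hrel2 n
    omega
  -- part 1
  have part1 : ∀ x : C₀(ℕ, 𝕜), {k : ℕ | x k ≠ 0}.Finite →
      ∀ k : ℕ, w ^ (k + 1) * (B x) (k + 1) = x k := by
    intro x _ k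
    rw [hBk, ← mul_assoc, ← mul_pow, mul_inv_cancel₀ hw0, one_pow, one_mul]
  -- part 2
  have part2 : ∀ n : ℕ, 1 ≤ n → ∀ (x : C₀(ℕ, 𝕜)) (k : ℕ),
      (B ^ n) x k = if n ≤ k then w⁻¹ ^ (n * k - n * (n - 1) / 2) * x (k - n) else 0 := by
    intro n
    induction n with
    | zero => omega
    | succ n ih =>
      intro _ x k
      rcases Nat.eq_zero_or_pos n with h0 | hn
      · subst h0
        cases k with
        | zero => simpa using hB0 x
        | succ k =>
          rw [zero_add, pow_one, hBk]
          simp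
      · rw [pow_succ, ContinuousLinearMap.mul_apply, ih hn]
        by_cases hk : n + 1 ≤ k
        · have hk' : n ≤ k := by omega
          rw [if_pos hk', if_pos hk]
          obtain ⟨m, hm⟩ : ∃ m, k - n = m + 1 := ⟨k - n - 1, by omega⟩
          rw [hm, hBk]
          have hm' : m = k - (n + 1) := by omega
          rw [hm', ← mul_assoc, ← pow_add]
          congr 2
          have h1 := heven n
          have h2 := heven (n + 1)
          have h3 : n * (n - 1) + 2 * n = (n + 1) * n := by
            rcases n with _ | m
            · simp
            · simp only [Nat.add_sub_cancel]
              ring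
          have h4 : (n + 1) * k = n * k + k := by ring
          have h5 : n * (n - 1) + n ≤ n * k := by
            have := hrel n
            have : n * n ≤ n * k := Nat.mul_le_mul_left n hk'
            omega
          simp only [Nat.add_sub_cancel]
          omega
        · by_cases hk' : n ≤ k
          · have hkn : k = n := by omega
            subst hkn
            rw [if_pos hk', if_neg hk]
            have : k - k = 0 := by omega
            simp [Nat.sub_self, hB0]
          · rw [if_neg hk', if_neg hk]
  -- part 3
  have hwpos : (0:ℝ) < ‖w‖ := by linarith
  have hinv_lt : ‖w‖⁻¹ < 1 := by
    rw [inv_lt_one_iff₀]; right; exact hw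
  have hinv_nonneg : (0:ℝ) ≤ ‖w‖⁻¹ := by positivity
  -- delta function
  let δ : C₀(ℕ, 𝕜) :=
    ⟨⟨fun k => if k = 0 then 1 else 0, continuous_of_discreteTopology⟩, by
      rw [cocompact_eq_atTop]
      refine tendsto_const_nhds.congr' ?_
      filter_upwards [eventually_ge_atTop 1] with k hk
      exact (if_neg (Nat.one_le_iff_ne_zero.mp hk)).symm⟩
  have hδ : ∀ k, δ k = if k = 0 then 1 else 0 := fun k => rfl
  have hδnorm : ‖δ‖ = 1 := by
    refine le_antisymm ?_ ?_
    · rw [← ZeroAtInftyContinuousMap.norm_toBCF_eq_norm]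
      refine (BoundedContinuousFunction.norm_le zero_le_one).mpr fun k => ?_
      show ‖δ k‖ ≤ 1
      rw [hδ]
      split <;> simp
    · have h := δ.toBCF.norm_coe_le_norm 0
      rw [ZeroAtInftyContinuousMap.norm_toBCF_eq_norm] at h
      simpa [hδ] using h
  have hnorm_apply : ∀ (f : C₀(ℕ, 𝕜)) (k : ℕ), ‖f k‖ ≤ ‖f‖ := by
    intro f k
    have h := f.toBCF.norm_coe_le_norm k
    rwa [ZeroAtInftyContinuousMap.norm_toBCF_eq_norm] at h
  have part3 : ∀ n : ℕ, 1 ≤ n → ‖B ^ n‖ = (‖w‖ ^ (n * (n + 1) / 2))⁻¹ := by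
    intro n hn
    set m := n * (n + 1) / 2 with hm
    refine le_antisymm ?_ ?_
    · refine ContinuousLinearMap.opNorm_le_bound _ (by positivity) fun x => ?_
      rw [← ZeroAtInftyContinuousMap.norm_toBCF_eq_norm]
      refine (BoundedContinuousFunction.norm_le (by positivity)).mpr fun k => ?_
      show ‖((B ^ n) x) k‖ ≤ (‖w‖ ^ m)⁻¹ * ‖x‖
      rw [part2 n hn x k]
      split
      · rename_i hk
        rw [norm_mul, norm_pow, norm_inv]
        have hme : m ≤ n * k - n * (n - 1) / 2 := by
          have h1 := heven n
          have h2 := heven2 n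
          have h3 := hrel n
          have h4 := hrel2 n
          have h5 : n * n ≤ n * k := Nat.mul_le_mul_left n hk
          omega
        have hb1 : ‖w‖⁻¹ ^ (n * k - n * (n - 1) / 2) ≤ ‖w‖⁻¹ ^ m :=
          pow_le_pow_of_le_one hinv_nonneg (le_of_lt hinv_lt) hme
        calc ‖w‖⁻¹ ^ (n * k - n * (n - 1) / 2) * ‖x (k - n)‖
            ≤ ‖w‖⁻¹ ^ m * ‖x‖ :=
              mul_le_mul hb1 (hnorm_apply x (k - n)) (norm_nonneg _) (by positivity)
          _ = (‖w‖ ^ m)⁻¹ * ‖x‖ := by rw [inv_pow]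
      · simp only [norm_zero]
        positivity
    · have hBδ : ‖(B ^ n) δ‖ ≤ ‖B ^ n‖ := by
        have := (B ^ n).le_opNorm δ
        rwa [hδnorm, mul_one] at this
      refine le_trans ?_ (le_trans (hnorm_apply ((B ^ n) δ) n) hBδ)
      rw [part2 n hn δ n, if_pos (le_refl n), Nat.sub_self, hδ, if_pos rfl, mul_one,
        norm_pow, norm_inv, hexp_diag n, ← inv_pow]
  -- part 4
  refine ⟨part1, part2, part3, ?_⟩
  set r : ℝ := ‖w‖ ^ (-(2:ℝ)⁻¹) with hr
  have hr_nonneg : 0 ≤ r := Real.rpow_nonneg (le_of_lt hwpos) _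
  have hr_lt : r < 1 :=
    Real.rpow_lt_one_of_one_lt_of_neg hw (by norm_num)
  have htend : Tendsto (fun n : ℕ => r ^ (n + 1)) atTop (nhds 0) :=
    (tendsto_pow_atTop_nhds_zero_of_lt_one hr_nonneg hr_lt).comp (tendsto_add_atTop_nat 1)
  refine htend.congr' ?_
  filter_upwards [eventually_ge_atTop 1] with n hn
  rw [part3 n hn]
  have hmcast : ((n * (n + 1) / 2 : ℕ) : ℝ) = (n : ℝ) * ((n : ℝ) + 1) / 2 := by
    have h2 := heven2 n
    have : ((2 * (n * (n + 1) / 2) : ℕ) : ℝ) = ((n * (n + 1) : ℕ) : ℝ) := by rw [h2]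
    push_cast at this
    linarith
  have hne : (n : ℝ) ≠ 0 := by positivity
  rw [← Real.rpow_natCast (‖w‖) (n * (n + 1) / 2), ← Real.rpow_neg (le_of_lt hwpos),
    ← Real.rpow_natCast r (n + 1), hr, ← Real.rpow_mul (le_of_lt hwpos),
    ← Real.rpow_mul (le_of_lt hwpos)]
  congr 1
  rw [hmcast]
  push_cast
  field_simp
end

section
/- For every w ∈ 𝔽 with |w| > 1, the unbounded weighted backward shift A_w in the space c of convergent sequences, (A_w x)_k = w^k·x_{k+1} with maximal domain D(A_w) = {x ∈ c : (w^k x_{k+1})_{k≥1} ∈ c}, satisfies D(A_w) ⊆ c₀; consequently C^∞(A_w) = ⋂_{n≥1} D(A_wⁿ) is not dense in c, and A_w is not hypercyclic. -/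
open Filter Topology

/-- The set of convergent sequences (the space `c`, as raw sequences; the Lean index `k`
corresponds to the paper's index `k + 1`). -/
def cSet (𝕜 : Type*) [RCLike 𝕜] : Set (ℕ → 𝕜) :=
  {x | ∃ L : 𝕜, Tendsto x atTop (nhds L)}

/-- The maximal domain of `A_w` in `c`: `D(A_w) = {x ∈ c : A_w x ∈ c}`. -/
def shiftDomC {𝕜 : Type*} [RCLike 𝕜] (w : 𝕜) : Set (ℕ → 𝕜) :=
  {x | x ∈ cSet 𝕜 ∧ shiftAct w x ∈ cSet 𝕜}

/-- The recursively defined domain of the `n`-th power: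
`D(A_wⁿ) = {x : A_w^m x ∈ D(A_w) for all m < n}`. -/
def shiftDomCPow {𝕜 : Type*} [RCLike 𝕜] (w : 𝕜) (n : ℕ) : Set (ℕ → 𝕜) :=
  {x | ∀ m < n, (shiftAct w)^[m] x ∈ shiftDomC w}

lemma domC_subset_c0 {𝕜 : Type*} [RCLike 𝕜] {w : 𝕜} (hw : 1 < ‖w‖) :
    shiftDomC w ⊆ c0Set 𝕜 := by
  rintro x ⟨⟨L, hL⟩, ⟨M, hM⟩⟩
  have hL0 : L = 0 := by
    by_contra h
    have h1 : Tendsto (fun k : ℕ => ‖x (k + 1)‖) atTop (nhds ‖L‖) :=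
      (hL.comp (tendsto_add_atTop_nat 1)).norm
    have h2 : Tendsto (fun k : ℕ => ‖w‖ ^ (k + 1)) atTop atTop :=
      (tendsto_pow_atTop_atTop_of_one_lt hw).comp (tendsto_add_atTop_nat 1)
    have h3 : Tendsto (fun k : ℕ => ‖shiftAct w x k‖) atTop atTop := by
      have := h2.atTop_mul_pos (norm_pos_iff.mpr h) h1
      simpa [shiftAct, norm_mul, norm_pow] using this
    exact not_tendsto_atTop_of_tendsto_nhds hM.norm h3
  rw [hL0] at hL
  exact hL

lemma not_close_to_one {𝕜 : Type*} [RCLike 𝕜] {z : ℕ → 𝕜}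
    (hz : z ∈ c0Set 𝕜) : ¬ supNorm (z - fun _ => (1:𝕜)) < 1/2 := by
  intro hlt
  have htend : Tendsto (fun k => ‖((z - fun _ => (1:𝕜)) : ℕ → 𝕜) k‖) atTop (nhds ‖(0:𝕜) - 1‖) := by
    exact ((hz.sub tendsto_const_nhds).norm)
  have hbdd : BddAbove (Set.range fun k => ‖((z - fun _ => (1:𝕜)) : ℕ → 𝕜) k‖) :=
    htend.bddAbove_range
  have hzn : Tendsto (fun k => ‖z k‖) atTop (nhds 0) := by simpa using hz.norm
  have hev : ∀ᶠ k in atTop, ‖z k‖ < 1/2 :=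
    hzn.eventually (eventually_lt_nhds (by norm_num : (0:ℝ) < 1/2))
  obtain ⟨k, hk⟩ := hev.exists
  have h1 : (1:ℝ)/2 < ‖((z - fun _ => (1:𝕜)) : ℕ → 𝕜) k‖ := by
    have h := norm_sub_norm_le (1:𝕜) (z k)
    rw [norm_sub_rev] at h
    simp only [Pi.sub_apply]
    have h1k : ‖(1:𝕜)‖ = 1 := norm_one
    linarith
  have h2 : ‖((z - fun _ => (1:𝕜)) : ℕ → 𝕜) k‖ ≤ supNorm (z - fun _ => (1:𝕜)) :=
    le_ciSup hbdd k
  linarith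

/-- For every `w` with `‖w‖ > 1`, the unbounded weighted backward shift
`A_w` in the space `c` of convergent sequences satisfies `D(A_w) ⊆ c₀`; consequently
`C^∞(A_w) = ⋂_{n ≥ 1} D(A_wⁿ)` is not dense in `c` (w.r.t. the sup-norm), and `A_w` is not
hypercyclic. -/
theorem unbounded_backward_shift_in_c_not_hypercyclic
    (𝕜 : Type*) [RCLike 𝕜] (w : 𝕜) (hw : 1 < ‖w‖) :
    shiftDomC w ⊆ c0Set 𝕜 ∧
    ¬ (∀ y ∈ cSet 𝕜, ∀ ε > (0 : ℝ),
        ∃ x : ℕ → 𝕜, (∀ n : ℕ, 1 ≤ n → x ∈ shiftDomCPow w n) ∧ supNorm (x - y) < ε) ∧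
    ¬ ∃ x : ℕ → 𝕜, (∀ n : ℕ, 1 ≤ n → x ∈ shiftDomCPow w n) ∧
        ∀ y ∈ cSet 𝕜, ∀ ε > (0 : ℝ), ∃ n : ℕ, supNorm ((shiftAct w)^[n] x - y) < ε := by
  refine ⟨domC_subset_c0 hw, ?_, ?_⟩
  · intro h
    obtain ⟨x, hx, hxn⟩ := h (fun _ => (1:𝕜)) ⟨1, tendsto_const_nhds⟩ (1/2) (by norm_num)
    have hx0 : x ∈ shiftDomC w := by
      have := hx 1 le_rfl 0 (by norm_num)
      simpa using this
    exact not_close_to_one (domC_subset_c0 hw hx0) hxn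
  · rintro ⟨x, hx, hcyc⟩
    obtain ⟨n, hn⟩ := hcyc (fun _ => (1:𝕜)) ⟨1, tendsto_const_nhds⟩ (1/2) (by norm_num)
    have hx0 : (shiftAct w)^[n] x ∈ shiftDomC w := hx (n+1) (by omega) n (by omega)
    exact not_close_to_one (domC_subset_c0 hw hx0) hn
end

section
/- For every w ∈ ℂ with |w| > 1, the bounded operator Â_w on the complex space c, (Â_w x)_k = w·(x_{k+1} + x_1 − 2l(x)), has spectrum σ(Â_w) = {λ ∈ ℂ : |λ| ≤ |w|}, point spectrum σ_p(Â_w) = {λ ∈ ℂ : |λ| < |w|}, and continuous spectrum σ_c(Â_w) = {λ ∈ ℂ : |λ| = |w|} (i.e., for |λ| = |w|, Â_w − λI is injective, not surjective, with dense range). -/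
set_option maxHeartbeats 2000000
set_option synthInstance.maxHeartbeats 400000


open Filter Topology BoundedContinuousFunction

/-- The complex space `c` of convergent sequences, as a submodule of the bounded sequences
`ℕ →ᵇ ℂ` with the sup-norm (the Lean index `k` corresponds to the paper's index `k + 1`,
so the paper's first entry `x_1` is `x 0`). -/
noncomputable def convSeqC : Submodule ℂ (ℕ →ᵇ ℂ) where
  carrier := {x | ∃ L : ℂ, Tendsto ⇑x atTop (nhds L)}
  add_mem' := by
    rintro x y ⟨Lx, hx⟩ ⟨Ly, hy⟩
    exact ⟨Lx + Ly, by rw [BoundedContinuousFunction.coe_add]; exact hx.add hy⟩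
  zero_mem' := ⟨0, by rw [BoundedContinuousFunction.coe_zero]; exact tendsto_const_nhds⟩
  smul_mem' := by
    rintro c x ⟨L, hx⟩
    exact ⟨c • L, by simpa using hx.const_smul c⟩

lemma convSeqC_isClosed : IsClosed (convSeqC : Set (ℕ →ᵇ ℂ)) := by
  refine isClosed_of_closure_subset ?_
  intro x hx
  have hcauchy : CauchySeq (⇑x : ℕ → ℂ) := by
    rw [Metric.cauchySeq_iff]
    intro ε hε
    obtain ⟨g, hg, hdist⟩ := Metric.mem_closure_iff.1 hx (ε/3) (by linarith)
    obtain ⟨L, hL⟩ : ∃ L : ℂ, Tendsto ⇑g atTop (nhds L) := hg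
    obtain ⟨N, hN⟩ := (Metric.cauchySeq_iff.1 hL.cauchySeq) (ε/3) (by linarith)
    refine ⟨N, fun m hm n hn => ?_⟩
    have h1 : dist (x m) (g m) ≤ dist x g := BoundedContinuousFunction.dist_coe_le_dist m
    have h2 : dist (g n) (x n) ≤ dist x g := by
      rw [dist_comm (g n)]
      exact BoundedContinuousFunction.dist_coe_le_dist n
    calc dist (x m) (x n) ≤ dist (x m) (g m) + dist (g m) (g n) + dist (g n) (x n) :=
          dist_triangle4 _ _ _ _
      _ < ε/3 + ε/3 + ε/3 := by
          linarith [hN m hm n hn]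
      _ = ε := by ring
  exact cauchySeq_tendsto_of_complete hcauchy

noncomputable instance : CompleteSpace convSeqC :=
  IsClosed.completeSpace_coe (hs := convSeqC_isClosed)

/-- Build an element of `convSeqC` from a bounded convergent function. -/
noncomputable def cseq (f : ℕ → ℂ) (C : ℝ) (hC : ∀ k, ‖f k‖ ≤ C) (L : ℂ)
    (hL : Tendsto f atTop (nhds L)) : convSeqC :=
  ⟨BoundedContinuousFunction.ofNormedAddCommGroupDiscrete f C hC, L, by simpa using hL⟩

@[simp] lemma cseq_coe (f : ℕ → ℂ) (C : ℝ) (hC : ∀ k, ‖f k‖ ≤ C) (L : ℂ)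
    (hL : Tendsto f atTop (nhds L)) (k : ℕ) : ((cseq f C hC L hL : ℕ →ᵇ ℂ) : ℕ → ℂ) k = f k :=
  rfl

lemma pow_mul_tendsto_eq_zero {μ q M : ℂ} (h1 : 1 ≤ ‖μ‖) (h2 : μ ≠ 1)
    (ht : Tendsto (fun k : ℕ => μ ^ k * q) atTop (𝓝 M)) : q = 0 := by
  by_contra hq
  have hM : M = μ * M := by
    have t2 : Tendsto (fun k : ℕ => μ ^ (k + 1) * q) atTop (𝓝 M) :=
      ht.comp (tendsto_add_atTop_nat 1)
    have t3 : Tendsto (fun k : ℕ => μ * (μ ^ k * q)) atTop (𝓝 (μ * M)) := ht.const_mul μ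
    have he : (fun k : ℕ => μ ^ (k + 1) * q) = fun k => μ * (μ ^ k * q) := by
      funext k; ring
    rw [he] at t2
    exact tendsto_nhds_unique t2 t3
  have hM0 : M = 0 := by
    have h : (1 - μ) * M = 0 := by linear_combination hM
    rcases mul_eq_zero.1 h with h | h
    · exact absurd (by linear_combination -h) h2
    · exact h
  rw [hM0] at ht
  have hev : ∀ᶠ k : ℕ in atTop, ‖μ ^ k * q‖ < ‖q‖ := by
    have := ht.norm
    simp only [norm_zero] at this
    exact this.eventually_lt_const (norm_pos_iff.2 hq)
  obtain ⟨k, hk⟩ := hev.exists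
  have : ‖q‖ ≤ ‖μ ^ k * q‖ := by
    rw [norm_mul, norm_pow]
    nlinarith [one_le_pow₀ h1 (n := k), norm_nonneg q]
  linarith

lemma rec_eq_zero {μ c L : ℂ} {x : ℕ → ℂ} {C : ℝ}
    (hμ : 1 ≤ ‖μ‖) (hb : ∀ k, ‖x k‖ ≤ C)
    (hx : Tendsto x atTop (𝓝 L)) (hc : c = 2 * L - x 0)
    (hrec : ∀ k, x (k + 1) = μ * x k + c) : ∀ k, x k = 0 := by
  have hμ0 : μ ≠ 0 := by
    intro h; rw [h, norm_zero] at hμ; linarith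
  by_cases h1 : μ = 1
  · subst h1
    have hform : ∀ k : ℕ, x k = x 0 + k * c := by
      intro k; induction k with
      | zero => simp
      | succ n ih => rw [hrec n, ih]; push_cast; ring
    have hc0 : c = 0 := by
      by_contra hc0
      obtain ⟨n, hn⟩ := exists_nat_gt ((C + ‖x 0‖) / ‖c‖)
      have hcpos : 0 < ‖c‖ := norm_pos_iff.2 hc0
      have h2 : (n : ℝ) * ‖c‖ ≤ ‖x n‖ + ‖x 0‖ := by
        calc (n : ℝ) * ‖c‖ = ‖(n : ℂ) * c‖ := by
              rw [norm_mul]; simp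
          _ = ‖(x 0 + n * c) - x 0‖ := by ring_nf
          _ ≤ ‖x 0 + (n : ℂ) * c‖ + ‖x 0‖ := norm_sub_le _ _
          _ = ‖x n‖ + ‖x 0‖ := by rw [hform n]
      have h3 : (C + ‖x 0‖) / ‖c‖ * ‖c‖ < n * ‖c‖ := by
        exact mul_lt_mul_of_pos_right hn hcpos
      rw [div_mul_cancel₀ _ (ne_of_gt hcpos)] at h3
      have := hb n
      linarith
    have hL : L = x 0 := by
      have : Tendsto x atTop (𝓝 (x 0)) := by
        have : x = fun _ => x 0 := by funext k; rw [hform k, hc0]; ring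
        rw [this]; exact tendsto_const_nhds
      exact tendsto_nhds_unique hx this
    have hx0 : x 0 = 0 := by
      rw [hc0, hL] at hc; linear_combination -hc
    intro k; rw [hform k, hc0, hx0]; ring
  · set p : ℂ := c / (μ - 1) with hp
    have hμ1 : μ - 1 ≠ 0 := sub_ne_zero.2 h1
    have hpc : p * (μ - 1) = c := div_mul_cancel₀ _ hμ1
    have hform : ∀ k : ℕ, x k = μ ^ k * (x 0 + p) - p := by
      intro k; induction k with
      | zero => simp
      | succ n ih =>
        rw [hrec n, ih]
        have : μ ^ (n + 1) = μ * μ ^ n := by ring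
        rw [this]; linear_combination -hpc
    have hq : x 0 + p = 0 := by
      refine pow_mul_tendsto_eq_zero hμ h1 (M := L + p) ?_
      have : (fun k : ℕ => μ ^ k * (x 0 + p)) = fun k => x k + p := by
        funext k; rw [hform k]; ring
      rw [this]
      exact hx.add tendsto_const_nhds
    have hxconst : ∀ k, x k = -p := by
      intro k; rw [hform k, hq]; ring
    have hL : L = -p := by
      have : Tendsto x atTop (𝓝 (-p)) := by
        have : x = fun _ => -p := funext hxconst
        rw [this]; exact tendsto_const_nhds
      exact tendsto_nhds_unique hx this
    have hp0 : p = 0 := by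
      rw [hL, hxconst 0] at hc
      -- c = 2 * (-p) - (-p) = -p, and c = p * (μ - 1)
      have : p * μ = 0 := by linear_combination hpc + hc
      rcases mul_eq_zero.1 this with h | h
      · exact h
      · exact absurd h hμ0
    intro k; rw [hxconst k, hp0]; ring

lemma rec_closed_form {μ : ℂ} {d x : ℕ → ℂ}
    (h : ∀ k, x (k + 1) = μ * x k + d k) (k : ℕ) :
    x k = μ ^ k * x 0 + ∑ j ∈ Finset.range k, μ ^ (k - 1 - j) * d j := by
  induction k with
  | zero => simp
  | succ n ih =>
    rw [h n, ih, mul_add, Finset.mul_sum, Finset.sum_range_succ]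
    have e1 : ∀ j ∈ Finset.range n,
        μ * (μ ^ (n - 1 - j) * d j) = μ ^ (n + 1 - 1 - j) * d j := by
      intro j hj
      have hj' : j < n := Finset.mem_range.1 hj
      have he : n + 1 - 1 - j = (n - 1 - j) + 1 := by omega
      rw [he, pow_succ]; ring
    rw [Finset.sum_congr rfl e1]
    have : μ ^ (n + 1 - 1 - n) * d n = d n := by simp
    rw [this]
    ring

lemma exists_eventually_const_solution (μ : ℂ) (hμ : μ ≠ 0) (w : ℂ) (hw : w ≠ 0)
    (yv : ℕ → ℂ) (Ly : ℂ) (N : ℕ) :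
    ∃ (x : ℕ → ℂ) (p : ℂ), (∀ k, N ≤ k → x k = p) ∧
      ∀ k, x (k + 1) = μ * x k + (if k < N then yv k else Ly) / w + (2 * p - x 0) := by
  set G : ℂ := ∑ i ∈ Finset.range N, μ ^ i with hGdef
  set T : ℂ := ∑ j ∈ Finset.range N, μ ^ (N - 1 - j) * (yv j / w) with hTdef
  set p : ℂ := -(μ ^ N * (Ly / w) + T - (Ly / w) * G) / μ ^ (N + 1) with hpdef
  set x0 : ℂ := p * (1 + μ) + Ly / w with hx0def
  set c : ℂ := p * (1 - μ) - Ly / w with hcdef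
  have hce : c = 2 * p - x0 := by rw [hcdef, hx0def]; ring
  set d : ℕ → ℂ := fun k => (if k < N then yv k else Ly) / w + c with hddef
  set x : ℕ → ℂ := fun k =>
    Nat.rec x0 (fun k xk => μ * xk + d k) k with hxdef
  have hrec : ∀ k, x (k + 1) = μ * x k + d k := fun k => rfl
  have hx00 : x 0 = x0 := rfl
  have hgeom : G * (μ - 1) = μ ^ N - 1 := geom_sum_mul μ N
  have hp' : μ ^ (N + 1) * p + (μ ^ N * (Ly / w) + T - (Ly / w) * G) = 0 := by
    rw [hpdef]
    field_simp
    ring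
  have hN : x N = p := by
    have hcf := rec_closed_form hrec N
    have hsplit : ∑ j ∈ Finset.range N, μ ^ (N - 1 - j) * d j
        = T + c * G := by
      have hrefl : ∑ j ∈ Finset.range N, c * μ ^ j
          = ∑ j ∈ Finset.range N, c * μ ^ (N - 1 - j) := by
        exact (Finset.sum_range_reflect (fun j => c * μ ^ j) N).symm
      rw [hTdef, hGdef, Finset.mul_sum, hrefl, ← Finset.sum_add_distrib]
      refine Finset.sum_congr rfl fun j hj => ?_
      have hj' : j < N := Finset.mem_range.1 hj
      simp only [hddef]
      rw [if_pos hj']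
      ring
    rw [hcf, hx00, hsplit, hx0def, hcdef]
    linear_combination hp' - p * hgeom
  have hconst : ∀ k, N ≤ k → x k = p := by
    intro k hk
    induction k, hk using Nat.le_induction with
    | base => exact hN
    | succ n hn ih =>
      have hd : d n = Ly / w + c := by
        simp only [hddef]
        rw [if_neg (by omega)]
      rw [hrec n, ih, hd, hcdef]
      ring
  refine ⟨x, p, hconst, fun k => ?_⟩
  rw [hrec k]
  simp only [hddef]
  rw [hce, ← hx00]
  ring

lemma geom_term_bound {ν : ℂ} {f : ℕ → ℂ} {C : ℝ} (hC : ∀ j, ‖f j‖ ≤ C) (j : ℕ) :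
    ‖ν ^ (j + 1) * f j‖ ≤ C * ‖ν‖ * ‖ν‖ ^ j := by
  rw [norm_mul, norm_pow, pow_succ]
  calc ‖ν‖ ^ j * ‖ν‖ * ‖f j‖ ≤ ‖ν‖ ^ j * ‖ν‖ * C :=
        mul_le_mul_of_nonneg_left (hC j) (by positivity)
    _ = C * ‖ν‖ * ‖ν‖ ^ j := by ring

lemma geom_summable_aux {ν : ℂ} (hν : ‖ν‖ < 1) {f : ℕ → ℂ} {C : ℝ} (hC : ∀ j, ‖f j‖ ≤ C) :
    Summable (fun j : ℕ => ν ^ (j + 1) * f j) :=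
  Summable.of_norm_bounded
    ((summable_geometric_of_lt_one (norm_nonneg ν) hν).mul_left _) (geom_term_bound hC)

lemma geom_tsum_norm_le {ν : ℂ} (hν : ‖ν‖ < 1) {f : ℕ → ℂ} {C : ℝ} (hC : ∀ j, ‖f j‖ ≤ C) :
    ‖∑' j : ℕ, ν ^ (j + 1) * f j‖ ≤ C * ‖ν‖ * (1 - ‖ν‖)⁻¹ := by
  have h0 : (0 : ℝ) ≤ ‖ν‖ := norm_nonneg _
  have hgs := (summable_geometric_of_lt_one h0 hν).mul_left (C * ‖ν‖)
  have hnorm : Summable (fun j : ℕ => ‖ν ^ (j + 1) * f j‖) :=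
    Summable.of_nonneg_of_le (fun j => norm_nonneg _) (geom_term_bound hC) hgs
  calc ‖∑' j : ℕ, ν ^ (j + 1) * f j‖ ≤ ∑' j : ℕ, ‖ν ^ (j + 1) * f j‖ :=
        norm_tsum_le_tsum_norm hnorm
    _ ≤ ∑' j : ℕ, (C * ‖ν‖) * ‖ν‖ ^ j := Summable.tsum_le_tsum (geom_term_bound hC) hnorm hgs
    _ = (C * ‖ν‖) * ∑' j : ℕ, ‖ν‖ ^ j := tsum_mul_left
    _ = C * ‖ν‖ * (1 - ‖ν‖)⁻¹ := by rw [tsum_geometric_of_lt_one h0 hν]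

lemma geom_tail_rec {ν : ℂ} (hν : ‖ν‖ < 1) {y : ℕ → ℂ} {C : ℝ} (hC : ∀ j, ‖y j‖ ≤ C) (k : ℕ) :
    (∑' j : ℕ, ν ^ (j + 1) * y (k + j))
      = ν * y k + ν * ∑' j : ℕ, ν ^ (j + 1) * y (k + 1 + j) := by
  have hs : Summable (fun j : ℕ => ν ^ (j + 1) * y (k + j)) :=
    geom_summable_aux hν (fun j => hC _)
  rw [Summable.tsum_eq_zero_add hs]
  have he : ∀ n : ℕ, ν ^ (n + 1 + 1) * y (k + (n + 1)) = ν * (ν ^ (n + 1) * y (k + 1 + n)) := by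
    intro n
    have h2 : k + (n + 1) = k + 1 + n := by omega
    rw [h2, pow_succ]; ring
  rw [tsum_congr he, tsum_mul_left]
  simp

lemma exists_solution_gt {μ : ℂ} (hμ : 1 < ‖μ‖) {w : ℂ} (hw : w ≠ 0)
    (y : ℕ → ℂ) (Cy : ℝ) (hCy : ∀ k, ‖y k‖ ≤ Cy) (Ly : ℂ) (hy : Tendsto y atTop (𝓝 Ly)) :
    ∃ (x : ℕ → ℂ) (Cx : ℝ) (L : ℂ), (∀ k, ‖x k‖ ≤ Cx) ∧ Tendsto x atTop (𝓝 L) ∧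
      ∀ k, x (k + 1) = μ * x k + y k / w + (2 * L - x 0) := by
  have hμ0 : μ ≠ 0 := by intro h; rw [h, norm_zero] at hμ; linarith
  have hμ1 : μ - 1 ≠ 0 := by
    intro h
    have : μ = 1 := by linear_combination h
    rw [this, norm_one] at hμ; linarith
  have hwμ1 : w * (μ - 1) ≠ 0 := mul_ne_zero hw hμ1
  set ν : ℂ := μ⁻¹ with hνdef
  have hν : ‖ν‖ < 1 := by
    rw [hνdef, norm_inv, inv_lt_one_iff₀]
    right; exact hμ
  have hμν : μ * ν = 1 := mul_inv_cancel₀ hμ0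
  set t : ℕ → ℂ := fun k => ∑' j : ℕ, ν ^ (j + 1) * y (k + j) with htdef
  have hrecT : ∀ k, t (k + 1) = μ * t k - y k := by
    intro k
    have h : t k = ν * y k + ν * t (k + 1) := geom_tail_rec hν hCy k
    linear_combination (-μ) * h + (-(t (k + 1) + y k)) * hμν
  set c : ℂ := ((μ - 1) * (t 0) / w - 2 * Ly / w) / μ with hcdef
  set x : ℕ → ℂ := fun k => (-(1 : ℂ) / w) * t k - c / (μ - 1) with hxdef
  set L : ℂ := (-(1 : ℂ) / w) * (Ly / (μ - 1)) - c / (μ - 1) with hLdef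
  have hc1 : c * (μ * w) = (μ - 1) * t 0 - 2 * Ly := by
    rw [hcdef]; field_simp
  have hxmul : ∀ k, x k * (w * (μ - 1)) = -(t k * (μ - 1)) - c * w := by
    intro k
    have hxk : x k = -(1 : ℂ) / w * t k - c / (μ - 1) := rfl
    rw [hxk]; field_simp
  have hL1 : L * (w * (μ - 1)) = -Ly - c * w := by
    rw [hLdef]; field_simp
  -- limit of t
  have htlim : Tendsto t atTop (𝓝 (Ly / (μ - 1))) := by
    have h1ν : (1 : ℂ) - ν ≠ 0 := by
      intro h
      have h2 : ν = 1 := by linear_combination -h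
      rw [hνdef, inv_eq_one] at h2
      exact hμ1 (by rw [h2]; ring)
    have hgeoLy : (∑' j : ℕ, ν ^ (j + 1) * Ly) = Ly / (μ - 1) := by
      have h1 : ∀ j : ℕ, ν ^ (j + 1) * Ly = (ν * Ly) * ν ^ j := by
        intro j; rw [pow_succ]; ring
      rw [tsum_congr h1, tsum_mul_left, tsum_geometric_of_norm_lt_one hν, hνdef]
      field_simp
    rw [Metric.tendsto_atTop]
    intro ε hε
    have hd : (0 : ℝ) < 1 - ‖ν‖ := by linarith
    set ε' : ℝ := ε * (1 - ‖ν‖) / 2 with hε'def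
    have hε' : 0 < ε' := by positivity
    obtain ⟨K, hK⟩ := (Metric.tendsto_atTop.1 hy) ε' hε'
    refine ⟨K, fun k hk => ?_⟩
    have hsub : t k - Ly / (μ - 1) = ∑' j : ℕ, ν ^ (j + 1) * (y (k + j) - Ly) := by
      have hs1 : Summable (fun j : ℕ => ν ^ (j + 1) * y (k + j)) :=
        geom_summable_aux hν (fun j => hCy _)
      have hs2 : Summable (fun j : ℕ => ν ^ (j + 1) * Ly) :=
        geom_summable_aux hν (fun j => le_refl ‖Ly‖)
      have he : ∀ j : ℕ, ν ^ (j + 1) * (y (k + j) - Ly)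
          = ν ^ (j + 1) * y (k + j) - ν ^ (j + 1) * Ly := by intro j; ring
      rw [tsum_congr he, Summable.tsum_sub hs1 hs2, hgeoLy]
    rw [dist_eq_norm, hsub]
    have hbound : ‖∑' j : ℕ, ν ^ (j + 1) * (y (k + j) - Ly)‖ ≤ ε' * ‖ν‖ * (1 - ‖ν‖)⁻¹ := by
      refine geom_tsum_norm_le hν (fun j => ?_)
      have h3 := hK (k + j) (le_trans hk (Nat.le_add_right k j))
      rw [dist_eq_norm] at h3
      exact le_of_lt h3
    have h2 : (1 - ‖ν‖) * (1 - ‖ν‖)⁻¹ = 1 := mul_inv_cancel₀ (ne_of_gt hd)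
    have harith : ε' * ‖ν‖ * (1 - ‖ν‖)⁻¹ ≤ ε / 2 := by
      calc ε' * ‖ν‖ * (1 - ‖ν‖)⁻¹ = (ε / 2) * ‖ν‖ * ((1 - ‖ν‖) * (1 - ‖ν‖)⁻¹) := by
            rw [hε'def]; ring
        _ = (ε / 2) * ‖ν‖ := by rw [h2, mul_one]
        _ ≤ ε / 2 * 1 := mul_le_mul_of_nonneg_left (le_of_lt hν) (by positivity)
        _ = ε / 2 := mul_one _
    linarith [hbound]
  -- bound on t and x
  have htbound : ∀ k, ‖t k‖ ≤ Cy * ‖ν‖ * (1 - ‖ν‖)⁻¹ := fun k =>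
    geom_tsum_norm_le hν (fun j => hCy _)
  have hxbound : ∀ k, ‖x k‖ ≤ (Cy * ‖ν‖ * (1 - ‖ν‖)⁻¹) / ‖w‖ + ‖c / (μ - 1)‖ := by
    intro k
    have hxk : x k = -(1 : ℂ) / w * t k - c / (μ - 1) := rfl
    have hwpos : 0 < ‖w‖ := norm_pos_iff.2 hw
    have h1 : ‖-(1 : ℂ) / w * t k‖ = ‖t k‖ / ‖w‖ := by
      rw [norm_mul, norm_div, norm_neg, norm_one]; ring
    calc ‖x k‖ ≤ ‖-(1 : ℂ) / w * t k‖ + ‖c / (μ - 1)‖ := by rw [hxk]; exact norm_sub_le _ _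
      _ = ‖t k‖ / ‖w‖ + ‖c / (μ - 1)‖ := by rw [h1]
      _ ≤ (Cy * ‖ν‖ * (1 - ‖ν‖)⁻¹) / ‖w‖ + ‖c / (μ - 1)‖ := by
          gcongr
          exact htbound k
  have hxlim : Tendsto x atTop (𝓝 L) := by
    rw [hxdef, hLdef]
    exact (htlim.const_mul _).sub_const _
  have hLx0 : 2 * L - x 0 = c := by
    apply mul_right_cancel₀ hwμ1
    linear_combination 2 * hL1 - hxmul 0 - hc1
  refine ⟨x, _, L, hxbound, hxlim, fun k => ?_⟩
  rw [hLx0]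
  apply mul_right_cancel₀ hwμ1
  have hyw : y k / w * w = y k := div_mul_cancel₀ _ hw
  linear_combination hxmul (k + 1) - μ * hxmul k - (μ - 1) * hrecT k - (μ - 1) * hyw

lemma no_solution_circle {μ : ℂ} (hμ : ‖μ‖ = 1) {w : ℂ} (hw : w ≠ 0)
    {x : ℕ → ℂ} {C : ℝ} (hb : ∀ k, ‖x k‖ ≤ C) (c : ℂ)
    (hrec : ∀ k, x (k + 1) = μ * x k + (μ ^ (k + 1) / ((k : ℂ) + 1)) / w + c) : False := by
  have hμ0 : μ ≠ 0 := by intro h; rw [h, norm_zero] at hμ; norm_num at hμ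
  set ν : ℂ := μ⁻¹ with hνdef
  have hνμ : ν * μ = 1 := inv_mul_cancel₀ hμ0
  have hν1 : ‖ν‖ = 1 := by rw [hνdef, norm_inv, hμ]; norm_num
  set Hr : ℕ → ℝ := fun k => ∑ j ∈ Finset.range k, (1 / (j + 1) : ℝ) with hHrdef
  have hHtop : Tendsto Hr atTop atTop := Real.tendsto_sum_range_one_div_nat_succ_atTop
  have hform : ∀ k, (ν ^ k) * x k
      = x 0 + (∑ j ∈ Finset.range k, (1 : ℂ) / ((j : ℂ) + 1)) / w
        + c * ∑ j ∈ Finset.range k, ν ^ (j + 1) := by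
    intro k
    induction k with
    | zero => simp
    | succ n ih =>
      rw [hrec n, Finset.sum_range_succ, Finset.sum_range_succ]
      have hstep : ν ^ (n + 1) * μ = ν ^ n := by
        rw [pow_succ, mul_assoc, hνμ, mul_one]
      have hpow : ν ^ (n + 1) * μ ^ (n + 1) = 1 := by
        rw [← mul_pow, hνμ, one_pow]
      linear_combination ih + x n * hstep + (((n : ℂ) + 1)⁻¹ * w⁻¹) * hpow
  have hnorm : ∀ k, ‖(ν ^ k) * x k‖ ≤ C := by
    intro k
    rw [norm_mul, norm_pow, hν1, one_pow, one_mul]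
    exact hb k
  have hcast : ∀ k, (∑ j ∈ Finset.range k, (1 : ℂ) / ((j : ℂ) + 1)) = ((Hr k : ℝ) : ℂ) := by
    intro k
    rw [hHrdef]
    push_cast
    ring
  have hHnorm : ∀ k, ‖(∑ j ∈ Finset.range k, (1 : ℂ) / ((j : ℂ) + 1)) / w‖ = Hr k / ‖w‖ := by
    intro k
    rw [norm_div, hcast k, Complex.norm_real]
    have : 0 ≤ Hr k := by
      rw [hHrdef]
      exact Finset.sum_nonneg fun j _ => by positivity
    rw [Real.norm_of_nonneg this]
  by_cases hone : μ = 1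
  · -- ν = 1, sums are k • c
    have hνone : ν = 1 := by rw [hνdef, hone]; norm_num
    have hformk : ∀ k, x k = x 0 + (∑ j ∈ Finset.range k, (1 : ℂ) / ((j : ℂ) + 1)) / w
        + c * k := by
      intro k
      have h := hform k
      rw [hνone] at h
      simpa using h
    -- first, c = 0
    have hc0 : c = 0 := by
      by_contra hc
      have hcpos : 0 < ‖c‖ := norm_pos_iff.2 hc
      -- ‖c‖ * k ≤ (C + ‖x 0‖) + Hr k / ‖w‖
      have hkey : ∀ k : ℕ, ‖c‖ * k ≤ (C + ‖x 0‖) + Hr k / ‖w‖ := by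
        intro k
        have h1 : c * k = x k - x 0 - (∑ j ∈ Finset.range k, (1 : ℂ) / ((j : ℂ) + 1)) / w := by
          rw [hformk k]; ring
        have h2 : ‖c * (k : ℂ)‖ ≤ ‖x k‖ + ‖x 0‖ + ‖(∑ j ∈ Finset.range k, (1 : ℂ) / ((j : ℂ) + 1)) / w‖ := by
          rw [h1]
          calc ‖x k - x 0 - _‖ ≤ ‖x k - x 0‖ + _ := norm_sub_le _ _
            _ ≤ ‖x k‖ + ‖x 0‖ + _ := by gcongr; exact norm_sub_le _ _
        rw [norm_mul, Complex.norm_natCast, hHnorm k] at h2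
        have := hb k
        linarith
      -- divide by k and take limits
      have hlim : Tendsto (fun k : ℕ => ((C + ‖x 0‖) + Hr k / ‖w‖) * (k : ℝ)⁻¹) atTop (𝓝 0) := by
        have l1 : Tendsto (fun k : ℕ => (C + ‖x 0‖) * (k : ℝ)⁻¹) atTop (𝓝 0) := by
          simpa using tendsto_inv_atTop_nhds_zero_nat.const_mul (C + ‖x 0‖)
        have l2 : Tendsto (fun k : ℕ => (k : ℝ)⁻¹ * Hr k) atTop (𝓝 0) := by
          have := (tendsto_one_div_add_atTop_nhds_zero_nat).cesaro
          simpa [hHrdef] using this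
        have l3 : Tendsto (fun k : ℕ => ((k : ℝ)⁻¹ * Hr k) / ‖w‖) atTop (𝓝 0) := by
          simpa using l2.div_const ‖w‖
        have := l1.add l3
        simp only [add_zero] at this
        refine this.congr fun k => ?_
        ring
      have hle : ‖c‖ ≤ 0 := by
        refine ge_of_tendsto hlim ?_
        filter_upwards [eventually_ge_atTop 1] with k hk
        have hkpos : (0 : ℝ) < k := by exact_mod_cast hk
        have := hkey k
        have h4 : ‖c‖ * k * (k:ℝ)⁻¹ ≤ ((C + ‖x 0‖) + Hr k / ‖w‖) * (k : ℝ)⁻¹ :=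
          mul_le_mul_of_nonneg_right this (by positivity)
        rw [mul_assoc, mul_inv_cancel₀ (ne_of_gt hkpos), mul_one] at h4
        exact h4
      linarith
    -- now x k = x 0 + H_k / w, contradiction with divergence
    have hkey2 : ∀ k, Hr k / ‖w‖ ≤ C + ‖x 0‖ := by
      intro k
      have h1 : (∑ j ∈ Finset.range k, (1 : ℂ) / ((j : ℂ) + 1)) / w = x k - x 0 := by
        rw [hformk k, hc0]; ring
      have h2 := hHnorm k
      rw [h1] at h2
      have h3 : ‖x k - x 0‖ ≤ ‖x k‖ + ‖x 0‖ := norm_sub_le _ _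
      have := hb k
      linarith
    obtain ⟨k, hk⟩ := (hHtop.eventually_ge_atTop ((C + ‖x 0‖ + 1) * ‖w‖)).exists
    have hwpos : 0 < ‖w‖ := norm_pos_iff.2 hw
    have := hkey2 k
    rw [div_le_iff₀ hwpos] at this
    nlinarith
  · -- μ ≠ 1 : the geometric part is bounded
    have hνne1 : ν ≠ 1 := by
      intro h
      rw [hνdef, inv_eq_one] at h
      exact hone h
    set B : ℝ := 2 / ‖ν - 1‖ with hBdef
    have hGbound : ∀ k, ‖∑ j ∈ Finset.range k, ν ^ (j + 1)‖ ≤ B := by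
      intro k
      have h1 : (∑ j ∈ Finset.range k, ν ^ (j + 1)) = ν * ∑ j ∈ Finset.range k, ν ^ j := by
        rw [Finset.mul_sum]
        exact Finset.sum_congr rfl fun j _ => by rw [pow_succ]; ring
      rw [h1, geom_sum_eq hνne1]
      rw [norm_mul, hν1, one_mul, norm_div]
      rw [hBdef]
      gcongr
      calc ‖ν ^ k - 1‖ ≤ ‖ν ^ k‖ + ‖(1 : ℂ)‖ := norm_sub_le _ _
        _ = 2 := by rw [norm_pow, hν1, one_pow, norm_one]; norm_num
    have hkey : ∀ k, Hr k / ‖w‖ ≤ C + ‖x 0‖ + ‖c‖ * B := by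
      intro k
      have h1 : (∑ j ∈ Finset.range k, (1 : ℂ) / ((j : ℂ) + 1)) / w
          = (ν ^ k) * x k - x 0 - c * ∑ j ∈ Finset.range k, ν ^ (j + 1) := by
        rw [hform k]; ring
      have h2 := hHnorm k
      rw [h1] at h2
      have h3 : ‖(ν ^ k) * x k - x 0 - c * ∑ j ∈ Finset.range k, ν ^ (j + 1)‖
          ≤ C + ‖x 0‖ + ‖c‖ * B := by
        calc ‖_ - x 0 - _‖ ≤ ‖(ν ^ k) * x k - x 0‖ + ‖c * ∑ j ∈ Finset.range k, ν ^ (j + 1)‖ :=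
              norm_sub_le _ _
          _ ≤ (‖(ν ^ k) * x k‖ + ‖x 0‖) + ‖c‖ * ‖∑ j ∈ Finset.range k, ν ^ (j + 1)‖ := by
              gcongr
              · exact norm_sub_le _ _
              · rw [norm_mul]
          _ ≤ C + ‖x 0‖ + ‖c‖ * B := by
              gcongr
              · exact hnorm k
              · exact hGbound k
      linarith
    obtain ⟨k, hk⟩ := (hHtop.eventually_ge_atTop ((C + ‖x 0‖ + ‖c‖ * B + 1) * ‖w‖)).exists
    have hwpos : 0 < ‖w‖ := norm_pos_iff.2 hw
    have := hkey k
    rw [div_le_iff₀ hwpos] at this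
    nlinarith

/-- For every `w ∈ ℂ` with `|w| > 1`, the bounded operator `Â_w` on the
complex space `c`, `(Â_w x)_k = w (x_{k+1} + x_1 - 2 l(x))`, has spectrum
`{λ : |λ| ≤ |w|}`, point spectrum `{λ : |λ| < |w|}`, and continuous spectrum
`{λ : |λ| = |w|}` (i.e. for `|λ| = |w|`, `Â_w - λI` is injective, not surjective, with
dense range). -/
theorem bounded_operator_on_c_spectrum
    (w : ℂ) (hw : 1 < ‖w‖)
    (l : convSeqC → ℂ)
    (hl : ∀ x : convSeqC, Tendsto (fun k : ℕ => (x : ℕ →ᵇ ℂ) k) atTop (nhds (l x)))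
    (A : convSeqC →L[ℂ] convSeqC)
    (hA : ∀ (x : convSeqC) (k : ℕ),
      (A x : ℕ →ᵇ ℂ) k = w * ((x : ℕ →ᵇ ℂ) (k + 1) + (x : ℕ →ᵇ ℂ) 0 - 2 * l x)) :
    spectrum ℂ A = {z : ℂ | ‖z‖ ≤ ‖w‖} ∧
    {z : ℂ | ∃ x : convSeqC, x ≠ 0 ∧ A x = z • x} = {z : ℂ | ‖z‖ < ‖w‖} ∧
    ∀ z : ℂ, ‖z‖ = ‖w‖ →
      Function.Injective ⇑(A - z • (1 : convSeqC →L[ℂ] convSeqC)) ∧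
      ¬ Function.Surjective ⇑(A - z • (1 : convSeqC →L[ℂ] convSeqC)) ∧
      Dense (Set.range ⇑(A - z • (1 : convSeqC →L[ℂ] convSeqC))) := by
  have hw0 : w ≠ 0 := by
    intro h; rw [h, norm_zero] at hw; linarith
  have hwpos : (0 : ℝ) < ‖w‖ := by linarith
  have hwinv : w⁻¹ * w = 1 := inv_mul_cancel₀ hw0
  -- coordinates of (A - z • 1) x
  have happ : ∀ (z : ℂ) (X : convSeqC) (k : ℕ),
      (((A - z • (1 : convSeqC →L[ℂ] convSeqC)) X : ℕ →ᵇ ℂ)) k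
        = w * ((X : ℕ →ᵇ ℂ) (k + 1) + (X : ℕ →ᵇ ℂ) 0 - 2 * l X) - z * (X : ℕ →ᵇ ℂ) k := by
    intro z X k
    have h1 : (A - z • (1 : convSeqC →L[ℂ] convSeqC)) X = A X - z • X := by
      simp [ContinuousLinearMap.sub_apply, ContinuousLinearMap.smul_apply,
        ContinuousLinearMap.one_apply]
    rw [h1, ← hA X k]
    simp [Submodule.coe_sub, Submodule.coe_smul, smul_eq_mul]
  -- extracting the recurrence from (A - z•1) X = Y
  have hrecur : ∀ (z : ℂ) (X Y : convSeqC), (A - z • 1) X = Y → ∀ k : ℕ,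
      (X : ℕ →ᵇ ℂ) (k + 1) = (z / w) * (X : ℕ →ᵇ ℂ) k + ((Y : ℕ →ᵇ ℂ) k) / w
        + (2 * l X - (X : ℕ →ᵇ ℂ) 0) := by
    intro z X Y h k
    have h1 : w * ((X : ℕ →ᵇ ℂ) (k + 1) + (X : ℕ →ᵇ ℂ) 0 - 2 * l X) - z * (X : ℕ →ᵇ ℂ) k
        = (Y : ℕ →ᵇ ℂ) k := by rw [← happ z X k, h]
    linear_combination w⁻¹ * h1
      - ((X : ℕ →ᵇ ℂ) (k + 1) + (X : ℕ →ᵇ ℂ) 0 - 2 * l X) * hwinv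
  -- building (A - z•1) X = Y from the recurrence
  have hbuild : ∀ (z : ℂ) (X Y : convSeqC),
      (∀ k : ℕ, (X : ℕ →ᵇ ℂ) (k + 1) = (z / w) * (X : ℕ →ᵇ ℂ) k + ((Y : ℕ →ᵇ ℂ) k) / w
        + (2 * l X - (X : ℕ →ᵇ ℂ) 0)) → (A - z • 1) X = Y := by
    intro z X Y hr
    apply Subtype.ext
    apply BoundedContinuousFunction.ext
    intro k
    rw [happ z X k, hr k]
    have hw1 : w * w⁻¹ = 1 := mul_inv_cancel₀ hw0
    linear_combination (z * (X : ℕ →ᵇ ℂ) k + (Y : ℕ →ᵇ ℂ) k) * hw1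
  -- injectivity for ‖w‖ ≤ ‖z‖
  have injAux : ∀ z : ℂ, ‖w‖ ≤ ‖z‖ → ∀ X : convSeqC, (A - z • 1) X = 0 → X = 0 := by
    intro z hz X hX
    have hμ : 1 ≤ ‖z / w‖ := by
      rw [norm_div, le_div_iff₀ hwpos]; linarith
    have hrec := hrecur z X 0 hX
    have hrec' : ∀ k : ℕ, (X : ℕ →ᵇ ℂ) (k + 1)
        = (z / w) * (X : ℕ →ᵇ ℂ) k + (2 * l X - (X : ℕ →ᵇ ℂ) 0) := by
      intro k
      have h1 := hrec k
      have h0 : ((0 : convSeqC) : ℕ →ᵇ ℂ) k = 0 := rfl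
      rw [h0] at h1
      simpa using h1
    have hall := rec_eq_zero (x := fun k => (X : ℕ →ᵇ ℂ) k) hμ
      (fun k => (X : ℕ →ᵇ ℂ).norm_coe_le_norm k) (hl X) rfl hrec'
    apply Subtype.ext
    apply BoundedContinuousFunction.ext
    intro k
    exact hall k
  have hsubapp : ∀ (z : ℂ) (X : convSeqC), (A - z • (1 : convSeqC →L[ℂ] convSeqC)) X
      = A X - z • X := by
    intro z X
    simp [ContinuousLinearMap.sub_apply, ContinuousLinearMap.smul_apply,
      ContinuousLinearMap.one_apply]
  have hinj : ∀ z : ℂ, ‖w‖ ≤ ‖z‖ →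
      Function.Injective ⇑(A - z • (1 : convSeqC →L[ℂ] convSeqC)) := by
    intro z hz a b hab
    have h1 : (A - z • 1) (a - b) = 0 := by rw [map_sub, hab, sub_self]
    exact sub_eq_zero.1 (injAux z hz (a - b) h1)
  -- eigenvectors for ‖z‖ < ‖w‖
  have heig : ∀ z : ℂ, ‖z‖ < ‖w‖ → ∃ X : convSeqC, X ≠ 0 ∧ A X = z • X := by
    intro z hz
    set μ : ℂ := z / w with hμdef
    have hμlt : ‖μ‖ < 1 := by rw [hμdef, norm_div, div_lt_one hwpos]; exact hz
    have hbd : ∀ k : ℕ, ‖(1 : ℂ) + μ ^ (k + 1)‖ ≤ 2 := by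
      intro k
      calc ‖(1 : ℂ) + μ ^ (k + 1)‖ ≤ ‖(1 : ℂ)‖ + ‖μ ^ (k + 1)‖ := norm_add_le _ _
        _ ≤ 1 + 1 := by
            rw [norm_one, norm_pow]
            gcongr
            exact pow_le_one₀ (norm_nonneg μ) (le_of_lt hμlt)
        _ = 2 := by norm_num
    have htend : Tendsto (fun k : ℕ => (1 : ℂ) + μ ^ (k + 1)) atTop (𝓝 1) := by
      have h1 : Tendsto (fun k : ℕ => μ ^ (k + 1)) atTop (𝓝 0) := by
        have h2 := (tendsto_pow_atTop_nhds_zero_of_norm_lt_one hμlt).comp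
          (tendsto_add_atTop_nat 1)
        exact h2
      simpa using tendsto_const_nhds.add h1
    set X : convSeqC := cseq (fun k => (1 : ℂ) + μ ^ (k + 1)) 2 hbd 1 htend with hXdef
    have hXcoe : ∀ k, (X : ℕ →ᵇ ℂ) k = 1 + μ ^ (k + 1) := fun k => rfl
    have hlX : l X = 1 := tendsto_nhds_unique (hl X) htend
    refine ⟨X, ?_, ?_⟩
    · intro h0
      have h1 : (X : ℕ →ᵇ ℂ) 0 = 0 := by rw [h0]; rfl
      rw [hXcoe 0] at h1
      have h2 : μ = -1 := by linear_combination h1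
      rw [h2] at hμlt
      simp at hμlt
    · have h2 : (A - z • 1) X = 0 := by
        apply hbuild
        intro k
        have h0k : ((0 : convSeqC) : ℕ →ᵇ ℂ) k = 0 := rfl
        rw [h0k, hXcoe (k + 1), hXcoe k, hXcoe 0, hlX, ← hμdef]
        ring
      rw [hsubapp z X] at h2
      exact sub_eq_zero.1 h2
  -- non-surjectivity on the circle
  have hnotsurj : ∀ z : ℂ, ‖z‖ = ‖w‖ →
      ¬ Function.Surjective ⇑(A - z • (1 : convSeqC →L[ℂ] convSeqC)) := by
    intro z hz hsurj
    set μ : ℂ := z / w with hμdef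
    have hμ1 : ‖μ‖ = 1 := by rw [hμdef, norm_div, hz, div_self (ne_of_gt hwpos)]
    have hcast : ∀ k : ℕ, ((k : ℂ) + 1) = ((k + 1 : ℕ) : ℂ) := by
      intro k; push_cast; ring
    have hbdY : ∀ k : ℕ, ‖μ ^ (k + 1) / ((k : ℂ) + 1)‖ ≤ 1 := by
      intro k
      rw [norm_div, norm_pow, hμ1, one_pow, hcast k, Complex.norm_natCast]
      rw [div_le_one (by positivity)]
      exact_mod_cast Nat.le_add_left 1 k
    have htendY : Tendsto (fun k : ℕ => μ ^ (k + 1) / ((k : ℂ) + 1)) atTop (𝓝 0) := by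
      refine squeeze_zero_norm (fun k => ?_) tendsto_one_div_add_atTop_nhds_zero_nat
      rw [norm_div, norm_pow, hμ1, one_pow, hcast k, Complex.norm_natCast]
      push_cast
      exact le_rfl
    set Y : convSeqC := cseq (fun k : ℕ => μ ^ (k + 1) / ((k : ℂ) + 1)) 1 hbdY 0 htendY
      with hYdef
    obtain ⟨X, hX⟩ := hsurj Y
    have hrec := hrecur z X Y hX
    have hYcoe : ∀ k : ℕ, (Y : ℕ →ᵇ ℂ) k = μ ^ (k + 1) / ((k : ℂ) + 1) := fun k => rfl
    refine no_solution_circle hμ1 hw0 (x := fun k => (X : ℕ →ᵇ ℂ) k) (C := ‖(X : ℕ →ᵇ ℂ)‖)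
      (fun k => (X : ℕ →ᵇ ℂ).norm_coe_le_norm k) (2 * l X - (X : ℕ →ᵇ ℂ) 0) ?_
    intro k
    show (X : ℕ →ᵇ ℂ) (k + 1) = μ * (X : ℕ →ᵇ ℂ) k
      + (μ ^ (k + 1) / ((k : ℂ) + 1)) / w + (2 * l X - (X : ℕ →ᵇ ℂ) 0)
    rw [← hYcoe k, hμdef]
    exact hrec k
  -- dense range on the circle
  have hdense : ∀ z : ℂ, ‖z‖ = ‖w‖ →
      Dense (Set.range ⇑(A - z • (1 : convSeqC →L[ℂ] convSeqC))) := by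
    intro z hz
    rw [Metric.dense_iff]
    intro Y r hr
    set μ : ℂ := z / w with hμdef
    have hμ1 : ‖μ‖ = 1 := by rw [hμdef, norm_div, hz, div_self (ne_of_gt hwpos)]
    have hμ0 : μ ≠ 0 := by
      intro h; rw [h, norm_zero] at hμ1; norm_num at hμ1
    obtain ⟨N, hN⟩ := Metric.tendsto_atTop.1 (hl Y) (r / 2) (by linarith)
    obtain ⟨x, p, hconst, hrec⟩ := exists_eventually_const_solution μ hμ0 w hw0
      (fun k => (Y : ℕ →ᵇ ℂ) k) (l Y) N
    set CX : ℝ := ∑ j ∈ Finset.range (N + 1), ‖x j‖ with hCXdef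
    have hxb : ∀ k, ‖x k‖ ≤ CX := by
      intro k
      rcases le_or_gt k N with hk | hk
      · exact Finset.single_le_sum (f := fun j => ‖x j‖) (fun j _ => norm_nonneg _)
          (Finset.mem_range.2 (by omega))
      · rw [hconst k (le_of_lt hk), ← hconst N le_rfl]
        exact Finset.single_le_sum (f := fun j => ‖x j‖) (fun j _ => norm_nonneg _)
          (Finset.mem_range.2 (by omega))
    have hxt : Tendsto x atTop (𝓝 p) := by
      refine tendsto_const_nhds.congr' ?_
      filter_upwards [eventually_ge_atTop N] with k hk
      exact (hconst k hk).symm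
    set X : convSeqC := cseq x CX hxb p hxt with hXdef
    have hlX : l X = p := tendsto_nhds_unique (hl X) hxt
    set y' : ℕ → ℂ := fun k => if k < N then (Y : ℕ →ᵇ ℂ) k else l Y with hy'def
    have hy'b : ∀ k, ‖y' k‖ ≤ ‖(Y : ℕ →ᵇ ℂ)‖ + ‖l Y‖ := by
      intro k
      simp only [hy'def]
      by_cases hk : k < N
      · rw [if_pos hk]
        have := (Y : ℕ →ᵇ ℂ).norm_coe_le_norm k
        have := norm_nonneg (l Y)
        linarith
      · rw [if_neg hk]
        have := norm_nonneg (Y : ℕ →ᵇ ℂ)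
        linarith
    have hy't : Tendsto y' atTop (𝓝 (l Y)) := by
      refine tendsto_const_nhds.congr' ?_
      filter_upwards [eventually_ge_atTop N] with k hk
      simp only [hy'def]
      rw [if_neg (by omega)]
    set Y' : convSeqC := cseq y' (‖(Y : ℕ →ᵇ ℂ)‖ + ‖l Y‖) hy'b (l Y) hy't with hY'def
    have hsol : (A - z • 1) X = Y' := by
      apply hbuild
      intro k
      rw [hlX, ← hμdef]
      exact hrec k
    refine ⟨Y', Set.mem_inter ?_ ⟨X, hsol⟩⟩
    have hdist : dist Y' Y ≤ r / 2 := by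
      rw [dist_eq_norm]
      have hcoe : ‖Y' - Y‖ = ‖((Y' - Y : convSeqC) : ℕ →ᵇ ℂ)‖ := rfl
      rw [hcoe]
      refine (BoundedContinuousFunction.norm_le (by linarith)).2 ?_
      intro k
      have hk : ((Y' - Y : convSeqC) : ℕ →ᵇ ℂ) k = y' k - (Y : ℕ →ᵇ ℂ) k := rfl
      rw [hk]
      simp only [hy'def]
      by_cases hkN : k < N
      · rw [if_pos hkN]
        simp
        linarith
      · rw [if_neg hkN]
        have h2 := hN k (by omega)
        rw [dist_eq_norm] at h2
        rw [norm_sub_rev]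
        exact le_of_lt h2
    exact Metric.mem_ball.2 (lt_of_le_of_lt hdist (by linarith))
  -- spectrum relations
  have halg : ∀ z : ℂ, (algebraMap ℂ (convSeqC →L[ℂ] convSeqC) : ℂ →+* (convSeqC →L[ℂ] convSeqC)) z - A
      = -(A - z • 1) := by
    intro z
    rw [Algebra.algebraMap_eq_smul_one]
    exact (neg_sub A (z • 1)).symm
  have hmem_eig : ∀ z : ℂ, (∃ X : convSeqC, X ≠ 0 ∧ A X = z • X) → z ∈ spectrum ℂ A := by
    intro z hex
    obtain ⟨X, hX0, hXe⟩ := hex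
    rw [spectrum.mem_iff]
    intro hunit
    have h0 : ((algebraMap ℂ (convSeqC →L[ℂ] convSeqC) : ℂ →+* (convSeqC →L[ℂ] convSeqC)) z - A) X = 0 := by
      rw [halg z, ContinuousLinearMap.neg_apply, hsubapp z X, hXe, sub_self, neg_zero]
    obtain ⟨u, hu⟩ := hunit
    have h1 : ((↑u⁻¹ * ↑u : convSeqC →L[ℂ] convSeqC)) X = X := by rw [u.inv_mul]; rfl
    rw [ContinuousLinearMap.mul_apply, hu, h0, map_zero] at h1
    exact hX0 h1.symm
  have hmem_nsurj : ∀ z : ℂ,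
      ¬ Function.Surjective ⇑(A - z • (1 : convSeqC →L[ℂ] convSeqC)) →
      z ∈ spectrum ℂ A := by
    intro z hns
    rw [spectrum.mem_iff]
    intro hunit
    apply hns
    intro Y
    obtain ⟨u, hu⟩ := hunit
    refine ⟨(↑u⁻¹ : convSeqC →L[ℂ] convSeqC) (-Y), ?_⟩
    have h1 : ((↑u * ↑u⁻¹ : convSeqC →L[ℂ] convSeqC)) (-Y) = -Y := by rw [u.mul_inv]; rfl
    rw [ContinuousLinearMap.mul_apply, hu, halg z, ContinuousLinearMap.neg_apply] at h1
    exact neg_injective h1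
  have hspec_le : ∀ z : ℂ, z ∈ spectrum ℂ A → ‖z‖ ≤ ‖w‖ := by
    intro z hzmem
    by_contra hgt
    push_neg at hgt
    set f : convSeqC →L[ℂ] convSeqC := A - z • 1 with hfdef
    have hfinj : Function.Injective ⇑f := hinj z (le_of_lt hgt)
    have hfsurj : Function.Surjective ⇑f := by
      intro Y
      have hμgt : 1 < ‖z / w‖ := by rw [norm_div, lt_div_iff₀ hwpos]; linarith
      obtain ⟨x, Cx, L, hxb, hxt, hrec⟩ := exists_solution_gt hμgt hw0
        (fun k => (Y : ℕ →ᵇ ℂ) k) ‖(Y : ℕ →ᵇ ℂ)‖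
        (fun k => (Y : ℕ →ᵇ ℂ).norm_coe_le_norm k) (l Y) (hl Y)
      set X : convSeqC := cseq x Cx hxb L hxt with hXdef
      have hlX : l X = L := tendsto_nhds_unique (hl X) hxt
      refine ⟨X, hbuild z X Y ?_⟩
      intro k
      rw [hlX]
      exact hrec k
    have hker : LinearMap.ker (f : convSeqC →ₗ[ℂ] convSeqC) = ⊥ := LinearMap.ker_eq_bot.2 hfinj
    have hrange : LinearMap.range (f : convSeqC →ₗ[ℂ] convSeqC) = ⊤ := LinearMap.range_eq_top.2 hfsurj
    set e := ContinuousLinearEquiv.ofBijective f hker hrange with hedef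
    have hunit : IsUnit ((algebraMap ℂ (convSeqC →L[ℂ] convSeqC) : ℂ →+* (convSeqC →L[ℂ] convSeqC)) z - A) := by
      rw [halg z]
      refine ⟨⟨-f, -(e.symm : convSeqC →L[ℂ] convSeqC), ?_, ?_⟩, rfl⟩
      · apply ContinuousLinearMap.ext
        intro V
        have h2 : f (e.symm V) = V :=
          ContinuousLinearEquiv.ofBijective_apply_symm_apply f hker hrange V
        simp [ContinuousLinearMap.mul_apply, ContinuousLinearMap.neg_apply,
          ContinuousLinearMap.one_apply, map_neg, neg_neg, h2]
      · apply ContinuousLinearMap.ext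
        intro V
        have h2 : e.symm (f V) = V :=
          ContinuousLinearEquiv.ofBijective_symm_apply_apply f hker hrange V
        simp [ContinuousLinearMap.mul_apply, ContinuousLinearMap.neg_apply,
          ContinuousLinearMap.one_apply, map_neg, neg_neg, h2]
    exact (spectrum.notMem_iff.2 hunit) hzmem
  -- final assembly
  refine ⟨?_, ?_, ?_⟩
  · ext z
    simp only [Set.mem_setOf_eq]
    constructor
    · exact hspec_le z
    · intro hle
      rcases lt_or_eq_of_le hle with hlt | heq
      · exact hmem_eig z (heig z hlt)
      · exact hmem_nsurj z (hnotsurj z heq)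
  · ext z
    simp only [Set.mem_setOf_eq]
    constructor
    · rintro ⟨X, hX0, hXe⟩
      by_contra hge
      push_neg at hge
      apply hX0
      apply injAux z hge
      rw [hsubapp z X, hXe, sub_self]
    · intro hlt
      exact heig z hlt
  · intro z hz
    exact ⟨hinj z (le_of_eq hz.symm), hnotsurj z hz, hdense z hz⟩
end
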